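/- arXiv:2103.08391 — 7 statements merged into one kernel-verified Lean document; each statement's English description precedes it below -/
import Mathlib

section
/- For any FOND problem P and any policy π: π is a strong-cyclic solution of P if and only if every maximal π-trajectory that is fair reaches a goal state. -/
namespace FondPaper

/-- A FOND model: initial state, goal states, and transition function
`F a s` giving the set of possible successor states of action `a` in state `s`. -/
structure FOND (S A : Type) where
  init : S
  goal : Set S
  F : A → S → Set S

variable {S A V : Type}

/-- Action `a` is applicable in `s` iff it has some successor. -/
def FOND.Applicable (P : FOND S A) (a : A) (s : S) : Prop := (P.F a s).Nonempty

/-- A policy is a partial function mapping non-goal states into actions. -/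
def IsPolicy (P : FOND S A) (π : S → Option A) : Prop := ∀ s ∈ P.goal, π s = none

/-- A (finite or infinite) trajectory: `len = some n` means the trajectory is
`states 0, …, states n`; `len = none` means it is infinite. -/
structure Traj (S : Type) where
  states : ℕ → S
  len : Option ℕ

/-- Index `i` is within the trajectory. -/
def Traj.Inside (τ : Traj S) (i : ℕ) : Prop := ∀ n, τ.len = some n → i ≤ n

/-- There is a step from index `i` to `i+1` in the trajectory. -/
def Traj.HasStep (τ : Traj S) (i : ℕ) : Prop := ∀ n, τ.len = some n → i < n

/-- `τ` is a π-trajectory of `P`. -/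
def IsTraj (P : FOND S A) (π : S → Option A) (τ : Traj S) : Prop :=
  τ.states 0 = P.init ∧
  ∀ i, τ.HasStep i → ∃ a, π (τ.states i) = some a ∧ τ.states (i + 1) ∈ P.F a (τ.states i)

/-- Maximal trajectory: infinite, or finite ending in the first goal state,
or in a state where the policy is undefined or prescribes an inapplicable action. -/
def MaximalTraj (P : FOND S A) (π : S → Option A) (τ : Traj S) : Prop :=
  τ.len = none ∨
  ∃ n, τ.len = some n ∧
    ((τ.states n ∈ P.goal ∧ ∀ i < n, τ.states i ∉ P.goal) ∨
     π (τ.states n) = none ∨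
     (∃ a, π (τ.states n) = some a ∧ ¬ P.Applicable a (τ.states n)))

/-- The trajectory reaches a goal state. -/
def ReachesGoal (P : FOND S A) (τ : Traj S) : Prop :=
  ∃ i, τ.Inside i ∧ τ.states i ∈ P.goal

/-- `s` is recurrent in `τ`: the trajectory is infinite and `s` occurs infinitely often. -/
def RecurrentIn (τ : Traj S) (s : S) : Prop :=
  τ.len = none ∧ {i | τ.states i = s}.Infinite

/-- One policy step: `s'` is a possible successor of `s` under the policy. -/
def PStep (P : FOND S A) (π : S → Option A) (s s' : S) : Prop :=
  ∃ a, π s = some a ∧ s' ∈ P.F a s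

/-- The policy reaches `s'` from `s`. -/
def ReachesFrom (P : FOND S A) (π : S → Option A) : S → S → Prop :=
  Relation.ReflTransGen (PStep P π)

/-- `s` is reached by the policy: some finite π-trajectory ends at `s`. -/
def ReachedBy (P : FOND S A) (π : S → Option A) (s : S) : Prop :=
  ∃ τ : Traj S, IsTraj P π τ ∧ ∃ n, τ.len = some n ∧ τ.states n = s

/-- Strong-cyclic solution: a goal is reachable via π from every state reached by π. -/
def StrongCyclic (P : FOND S A) (π : S → Option A) : Prop :=
  ∀ s, ReachedBy P π s → ∃ g ∈ P.goal, ReachesFrom P π s g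

/-- Strong solution: every maximal π-trajectory reaches a goal state. -/
def Strong (P : FOND S A) (π : S → Option A) : Prop :=
  ∀ τ : Traj S, IsTraj P π τ → MaximalTraj P π τ → ReachesGoal P τ

/-- Fairness when all actions are fair: each recurrent state is immediately
followed by each of its possible successors infinitely often.
(Finite trajectories have no recurrent states, hence are fair.) -/
def FairAll (P : FOND S A) (π : S → Option A) (τ : Traj S) : Prop :=
  ∀ s, RecurrentIn τ s → ∀ a, π s = some a → ∀ s' ∈ P.F a s,
    {i | τ.states i = s ∧ τ.states (i + 1) = s'}.Infinite

/-- The policy is acyclic: no π-trajectory visits the same state more than once. -/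
def AcyclicPolicy (P : FOND S A) (π : S → Option A) : Prop :=
  ∀ τ : Traj S, IsTraj P π τ → ∀ i j, τ.Inside i → τ.Inside j →
    τ.states i = τ.states j → i = j

/-- The non-deterministic actions of `P`: those with at least two possible
successors in some state. -/
def NonDetActs (P : FOND S A) : Set A :=
  {a | ∃ s s₁ s₂, s₁ ∈ P.F a s ∧ s₂ ∈ P.F a s ∧ s₁ ≠ s₂}

/-- The occurrence of the action `π s` at recurrent state `s` of trajectory `τ`
is fair: for some constraint `(A, B) ∈ C`, `π s ∈ A` and actions from `B`
occur only finitely often along `τ`. -/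
def FairOcc (C : Set (Set A × Set A)) (π : S → Option A) (τ : Traj S) (s : S) : Prop :=
  ∃ c ∈ C, (∃ a, π s = some a ∧ a ∈ c.1) ∧
    ∀ b ∈ c.2, {i | π (τ.states i) = some b}.Finite

/-- `τ` is fair for the FOND+ problem `⟨P, C⟩`. -/
def FairPlus (P : FOND S A) (C : Set (Set A × Set A)) (π : S → Option A) (τ : Traj S) : Prop :=
  ∀ s, RecurrentIn τ s → FairOcc C π τ s → ∀ a, π s = some a → ∀ s' ∈ P.F a s,
    {i | τ.states i = s ∧ τ.states (i + 1) = s'}.Infinite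

/-- `π` solves the FOND+ problem `⟨P, C⟩`. -/
def SolvesPlus (P : FOND S A) (C : Set (Set A × Set A)) (π : S → Option A) : Prop :=
  ∀ τ : Traj S, IsTraj P π τ → MaximalTraj P π τ → FairPlus P C π τ → ReachesGoal P τ

/-- Well-formed set of fairness constraints: finite, each `A`-part a set of
non-deterministic actions and each `B`-part disjoint from the `A`-part. -/
def WellFormedC (P : FOND S A) (C : Set (Set A × Set A)) : Prop :=
  C.Finite ∧ ∀ c ∈ C, c.1 ⊆ NonDetActs P ∧ Disjoint c.1 c.2

/-- A cycle on `s` w.r.t. policy `π`: a sequence `s = t 0, …, t k = s` with `k ≥ 1`,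
each `t i` (`i < k`) non-goal with `π` defined and `t (i+1)` a possible successor. -/
def CycleOn (P : FOND S A) (π : S → Option A) (s : S) (t : ℕ → S) (k : ℕ) : Prop :=
  1 ≤ k ∧ t 0 = s ∧ t k = s ∧
    ∀ i < k, t i ∉ P.goal ∧ ∃ a, π (t i) = some a ∧ t (i + 1) ∈ P.F a (t i)

/-- `s` is fair-for-`T`: for some `(A, B) ∈ C`, `π s ∈ A` and every cycle on `s`
containing a state where `π` prescribes a `B`-action also contains a state in `T`. -/
def FairFor (P : FOND S A) (C : Set (Set A × Set A)) (π : S → Option A)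
    (T : Set S) (s : S) : Prop :=
  ∃ c ∈ C, (∃ a, π s = some a ∧ a ∈ c.1) ∧
    ∀ t k, CycleOn P π s t k →
      (∃ i ≤ k, ∃ b, π (t i) = some b ∧ b ∈ c.2) → ∃ j ≤ k, t j ∈ T

/-- `T` is closed under the FOND+ termination rules. -/
def TermClosed (P : FOND S A) (C : Set (Set A × Set A)) (π : S → Option A) (T : Set S) : Prop :=
  P.goal ⊆ T ∧
  (∀ s a, π s = some a → FairFor P C π T s → (∃ s' ∈ P.F a s, s' ∈ T) → s ∈ T) ∧
  (∀ s a, π s = some a → ¬ FairFor P C π T s → (P.F a s).Nonempty →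
    (∀ s' ∈ P.F a s, s' ∈ T) → s ∈ T)

/-- `s` is terminating for `π` in `⟨P, C⟩`: it belongs to the least set closed
under the FOND+ termination rules. -/
def Terminating (P : FOND S A) (C : Set (Set A × Set A)) (π : S → Option A) (s : S) : Prop :=
  ∀ T : Set S, TermClosed P C π T → s ∈ T

/-- The operator `Φ` of the FOND+ termination computation. -/
def Phi (P : FOND S A) (C : Set (Set A × Set A)) (π : S → Option A) (T : Set S) : Set S :=
  P.goal ∪
  {s | ∃ a, π s = some a ∧ FairFor P C π T s ∧ ∃ s' ∈ P.F a s, s' ∈ T} ∪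
  {s | ∃ a, π s = some a ∧ (P.F a s).Nonempty ∧ P.F a s ⊆ T}

/-- The policy graph of `P` and `π`: edges `(s, s')` for non-goal reachable `s`
with `π s` defined and `s'` a possible successor. -/
def PolicyEdges (P : FOND S A) (π : S → Option A) : Set (S × S) :=
  {e | ReachesFrom P π P.init e.1 ∧ e.1 ∉ P.goal ∧ PStep P π e.1 e.2}

/-- Path (of length ≥ 0) in a graph given by its edge set. -/
def GPath (G : Set (S × S)) : S → S → Prop :=
  Relation.ReflTransGen (fun x y => (x, y) ∈ G)

/-- Edge `e = (s, s')` of `G` is removable by Sieve: `π s` decrements some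
variable `x` not incremented at any state lying on a path in `G` from `s'` back to `s`. -/
def Removable (π : S → Option A) (decs incs : A → Set V) (G : Set (S × S)) (e : S × S) : Prop :=
  e ∈ G ∧ ∃ x : V, (∃ a, π e.1 = some a ∧ x ∈ decs a) ∧
    ∀ w, GPath G e.2 w → GPath G w e.1 → ∀ a, π w = some a → x ∉ incs a

/-- One Sieve edge-removal step. -/
def SieveStep (π : S → Option A) (decs incs : A → Set V) (G G' : Set (S × S)) : Prop :=
  ∃ e, Removable π decs incs G e ∧ G' = G \ {e}

/-- Graph acyclicity: no nonempty path from a state back to itself. -/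
def GAcyclic (G : Set (S × S)) : Prop :=
  ∀ s s', (s, s') ∈ G → ¬ GPath G s' s

/-- A cycle on `s` in a graph given by its edge set. -/
def ECycleOn (E : Set (S × S)) (s : S) (t : ℕ → S) (k : ℕ) : Prop :=
  1 ≤ k ∧ t 0 = s ∧ t k = s ∧ ∀ i < k, (t i, t (i + 1)) ∈ E

/-- `T` is closed under the QNP termination rules. -/
def QNPClosed (P : FOND S A) (π : S → Option A) (decs incs : A → Set V) (T : Set S) : Prop :=
  ∀ s, ReachesFrom P π P.init s →
    ((¬ ∃ t k, ECycleOn (PolicyEdges P π) s t k) ∨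
     (∀ t k, ECycleOn (PolicyEdges P π) s t k → ∃ j ≤ k, t j ∈ T) ∨
     (∃ x, (∃ a, π s = some a ∧ x ∈ decs a) ∧
        ∀ t k, ECycleOn (PolicyEdges P π) s t k →
          (∃ i ≤ k, ∃ a, π (t i) = some a ∧ x ∈ incs a) → ∃ j ≤ k, t j ∈ T)) →
    s ∈ T

/-- `s` is QNP-terminating: it belongs to the least set closed under the QNP
termination rules. -/
def QNPTerm (P : FOND S A) (π : S → Option A) (decs incs : A → Set V) (s : S) : Prop :=
  ∀ T : Set S, QNPClosed P π decs incs T → s ∈ T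

/-- `T` is closed under the Dual-FOND termination rules. -/
def DualClosed (P : FOND S A) (fair : A → Prop) (π : S → Option A) (T : Set S) : Prop :=
  P.goal ⊆ T ∧
  (∀ s a, π s = some a → fair a → (∃ s' ∈ P.F a s, s' ∈ T) → s ∈ T) ∧
  (∀ s a, π s = some a → ¬ fair a → (P.F a s).Nonempty →
    (∀ s' ∈ P.F a s, s' ∈ T) → s ∈ T)

/-- `s` is Dual-FOND terminating. -/
def DualTerm (P : FOND S A) (fair : A → Prop) (π : S → Option A) (s : S) : Prop :=
  ∀ T : Set S, DualClosed P fair π T → s ∈ T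

/-- `π` solves the Dual FOND problem `(P, fair)`. -/
def SolvesDual [Fintype S] (P : FOND S A) (fair : A → Prop) (π : S → Option A) : Prop :=
  (∀ s, ReachedBy P π s → s ∉ P.goal → ∃ a, π s = some a ∧ (P.F a s).Nonempty) ∧
  ∃ d : S → ℕ,
    (∀ s, ReachedBy P π s → d s ≤ Fintype.card S) ∧
    (∀ s, ReachedBy P π s → s ∈ P.goal → d s = 0) ∧
    (∀ s a, ReachedBy P π s → π s = some a →
      (fair a → ∃ s' ∈ P.F a s, d s' < d s) ∧
      (¬ fair a → ∀ s' ∈ P.F a s, d s' < d s))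

end FondPaper

open FondPaper

section StmtZeroAux

open Classical

variable {S A : Type}

lemma nat_infinite_exists_gt {s : Set ℕ} (hs : s.Infinite) (a : ℕ) : ∃ b ∈ s, a < b := by
  by_contra h
  push_neg at h
  exact hs (Set.Finite.subset (Set.finite_Iic a) fun x hx => h x hx)

lemma nat_unbounded_infinite {s : Set ℕ} (h : ∀ a : ℕ, ∃ b ∈ s, a < b) : s.Infinite :=
  Set.infinite_of_forall_exists_gt h

lemma pstep_reach_mono (P : FOND S A) (π : S → Option A) {s t u : S}
    (h1 : ReachesFrom P π s t) (h2 : ReachesFrom P π t u) : ReachesFrom P π s u :=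
  Relation.ReflTransGen.trans h1 h2

lemma reaches_path (P : FOND S A) (π : S → Option A) {s t : S} (h : ReachesFrom P π s t) :
    ∃ p : ℕ × (ℕ → S), p.2 0 = s ∧ p.2 p.1 = t ∧ ∀ i < p.1, PStep P π (p.2 i) (p.2 (i + 1)) := by
  induction h with
  | refl => exact ⟨(0, fun _ => s), rfl, rfl, fun i hi => absurd hi (Nat.not_lt_zero i)⟩
  | @tail b c _ hbc ih =>
    obtain ⟨⟨k, w⟩, hw0, hwk, hws⟩ := ih
    dsimp only at hw0 hwk hws
    refine ⟨(k + 1, fun i => if i ≤ k then w i else c), by simp [hw0], by simp, ?_⟩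
    intro i hi
    rcases Nat.lt_or_ge i k with h1 | h1
    · have : i ≤ k := Nat.le_of_lt h1
      have : (i : ℕ) + 1 ≤ k := h1
      simpa [show i ≤ k from Nat.le_of_lt h1, this] using hws i h1
    · have hik : i = k := by omega
      subst hik
      dsimp only
      rw [if_pos (le_refl i), if_neg (show ¬ i + 1 ≤ i by omega), hwk]
      exact hbc

lemma path_mem_reach (P : FOND S A) (π : S → Option A) {s : S} (w : ℕ → S) (hw0 : w 0 = s)
    (hws : ∀ i < k, PStep P π (w i) (w (i + 1))) : ∀ j ≤ k, ReachesFrom P π s (w j) := by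
  intro j hj
  induction j with
  | zero => rw [hw0]; exact Relation.ReflTransGen.refl
  | succ j ih =>
    exact Relation.ReflTransGen.tail (ih (by omega)) (hws j (by omega))

/-- Offsets of a sequence of segments. -/
def offsF (seg : ℕ → ℕ × (ℕ → S)) : ℕ → ℕ
  | 0 => 0
  | m + 1 => offsF seg m + (seg m).1

lemma offsF_mono (seg : ℕ → ℕ × (ℕ → S)) : Monotone (offsF seg) :=
  monotone_nat_of_le_succ fun m => Nat.le_add_right _ _

lemma offsF_ge (seg : ℕ → ℕ × (ℕ → S)) (hlen : ∀ m, 1 ≤ m → 1 ≤ (seg m).1) :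
    ∀ m, m ≤ offsF seg (m + 1) := by
  intro m
  induction m with
  | zero => exact Nat.zero_le _
  | succ m ih =>
    have h1 := hlen (m + 1) (by omega)
    have h2 : offsF seg (m + 1 + 1) = offsF seg (m + 1) + (seg (m + 1)).1 := rfl
    omega

/-- Segment index containing position `i`. -/
noncomputable def segIdxF (seg : ℕ → ℕ × (ℕ → S)) (i : ℕ) : ℕ :=
  Nat.findGreatest (fun m => offsF seg m ≤ i) (i + 1)

lemma segIdxF_spec (seg : ℕ → ℕ × (ℕ → S)) (hlen : ∀ m, 1 ≤ m → 1 ≤ (seg m).1) (i : ℕ) :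
    offsF seg (segIdxF seg i) ≤ i ∧ i < offsF seg (segIdxF seg i + 1) := by
  classical
  constructor
  · exact Nat.findGreatest_spec (P := fun m => offsF seg m ≤ i) (Nat.zero_le _)
      (by simp [offsF])
  · rcases Nat.lt_or_ge (segIdxF seg i) (i + 1) with h | h
    · by_contra hc
      push_neg at hc
      exact Nat.findGreatest_is_greatest (P := fun m => offsF seg m ≤ i) (n := i + 1)
        (lt_add_one _) (Nat.succ_le_of_lt h) hc
    · have h1 : segIdxF seg i ≤ i + 1 := Nat.findGreatest_le _
      have h2 : segIdxF seg i = i + 1 := le_antisymm h1 h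
      have h3 : i + 1 ≤ offsF seg (i + 1 + 1) := offsF_ge seg hlen (i + 1)
      rw [h2]
      omega

/-- The state at global position `i` of the concatenated trajectory. -/
noncomputable def StF (seg : ℕ → ℕ × (ℕ → S)) (i : ℕ) : S :=
  (seg (segIdxF seg i)).2 (i - offsF seg (segIdxF seg i))

lemma StF_agree_aux (seg : ℕ → ℕ × (ℕ → S))
    (hmatch : ∀ m, (seg (m + 1)).2 0 = (seg m).2 (seg m).1) :
    ∀ d m i, offsF seg m ≤ i → i ≤ offsF seg (m + 1) →
      offsF seg (m + d) ≤ i →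
      (seg m).2 (i - offsF seg m) = (seg (m + d)).2 (i - offsF seg (m + d)) := by
  intro d
  induction d with
  | zero => intro m i _ _ _; rfl
  | succ d ih =>
    intro m i h1 h2 h3
    have hmono : offsF seg (m + 1) ≤ offsF seg (m + (d + 1)) := offsF_mono seg (by omega)
    have hi : i = offsF seg (m + 1) := le_antisymm h2 (le_trans hmono h3)
    have hlhs : i - offsF seg m = (seg m).1 := by
      have : offsF seg (m + 1) = offsF seg m + (seg m).1 := rfl
      omega
    have hidx : i - offsF seg (m + 1) = 0 := by omega
    have e1 : (seg m).2 (i - offsF seg m) = (seg (m + 1)).2 (i - offsF seg (m + 1)) := by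
      rw [hlhs, hidx]
      exact (hmatch m).symm
    rw [e1]
    have := ih (m + 1) i (by omega) (by rw [hi]; exact offsF_mono seg (by omega))
      (by rw [show m + 1 + d = m + (d + 1) by omega]; exact h3)
    rw [show m + 1 + d = m + (d + 1) by omega] at this
    exact this

lemma StF_eq (seg : ℕ → ℕ × (ℕ → S)) (hlen : ∀ m, 1 ≤ m → 1 ≤ (seg m).1)
    (hmatch : ∀ m, (seg (m + 1)).2 0 = (seg m).2 (seg m).1) {m i : ℕ}
    (h1 : offsF seg m ≤ i) (h2 : i ≤ offsF seg (m + 1)) :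
    StF seg i = (seg m).2 (i - offsF seg m) := by
  obtain ⟨g1, g2⟩ := segIdxF_spec seg hlen i
  show (seg (segIdxF seg i)).2 (i - offsF seg (segIdxF seg i)) = (seg m).2 (i - offsF seg m)
  set M := segIdxF seg i with hM
  rcases Nat.le_total m M with h | h
  · have h5 := StF_agree_aux seg hmatch (M - m) m i h1 h2
      (by rw [show m + (M - m) = M by omega]; exact g1)
    rw [show m + (M - m) = M by omega] at h5
    exact h5.symm
  · have h5 := StF_agree_aux seg hmatch (m - M) M i g1 (le_of_lt g2)
      (by rw [show M + (m - M) = m by omega]; exact h1)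
    rw [show M + (m - M) = m by omega] at h5
    exact h5

lemma StF_step (P : FOND S A) (π : S → Option A) (seg : ℕ → ℕ × (ℕ → S))
    (hlen : ∀ m, 1 ≤ m → 1 ≤ (seg m).1)
    (hmatch : ∀ m, (seg (m + 1)).2 0 = (seg m).2 (seg m).1)
    (hstep : ∀ m j, j < (seg m).1 → PStep P π ((seg m).2 j) ((seg m).2 (j + 1))) :
    ∀ i, PStep P π (StF seg i) (StF seg (i + 1)) := by
  intro i
  obtain ⟨g1, g2⟩ := segIdxF_spec seg hlen i
  set M := segIdxF seg i with hM
  have hoff : offsF seg (M + 1) = offsF seg M + (seg M).1 := rfl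
  have e1 : StF seg i = (seg M).2 (i - offsF seg M) := StF_eq seg hlen hmatch g1 (le_of_lt g2)
  have e2 : StF seg (i + 1) = (seg M).2 (i + 1 - offsF seg M) :=
    StF_eq seg hlen hmatch (by omega) (by omega)
  rw [e1, e2, show i + 1 - offsF seg M = (i - offsF seg M) + 1 by omega]
  exact hstep M _ (by omega)

lemma StF_reaches (P : FOND S A) (π : S → Option A) (seg : ℕ → ℕ × (ℕ → S))
    (hlen : ∀ m, 1 ≤ m → 1 ≤ (seg m).1)
    (hmatch : ∀ m, (seg (m + 1)).2 0 = (seg m).2 (seg m).1)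
    (hstep : ∀ m j, j < (seg m).1 → PStep P π ((seg m).2 j) ((seg m).2 (j + 1))) :
    ∀ i j, i ≤ j → ReachesFrom P π (StF seg i) (StF seg j) := by
  intro i j hij
  induction j with
  | zero =>
    have : i = 0 := by omega
    subst this; exact Relation.ReflTransGen.refl
  | succ j ih =>
    rcases Nat.lt_or_ge i (j + 1) with h | h
    · exact Relation.ReflTransGen.tail (ih (by omega))
        (StF_step P π seg hlen hmatch hstep j)
    · have : i = j + 1 := by omega
      subst this; exact Relation.ReflTransGen.refl

/-- The segments of the constructed fair infinite trajectory. -/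
noncomputable def segsF (P : FOND S A) (π : S → Option A) (σ : S → S)
    (g : ℕ → S × S) (seg0 : ℕ × (ℕ → S)) : ℕ → ℕ × (ℕ → S)
  | 0 => seg0
  | m + 1 =>
    let prev := segsF P π σ g seg0 m
    let u := prev.2 prev.1
    if h : ReachesFrom P π u (g m).1 ∧ PStep P π (g m).1 (g m).2 then
      let p := Classical.choose (reaches_path P π h.1)
      (p.1 + 1, fun i => if i ≤ p.1 then p.2 i else (g m).2)
    else (1, fun i => if i = 0 then u else σ u)

lemma segsF_len (P : FOND S A) (π : S → Option A) (σ : S → S) (g : ℕ → S × S)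
    (seg0 : ℕ × (ℕ → S)) : ∀ m, 1 ≤ m → 1 ≤ (segsF P π σ g seg0 m).1 := by
  rintro (_ | m) hm
  · omega
  · show 1 ≤ (segsF P π σ g seg0 (m + 1)).1
    rw [segsF]
    split
    · exact Nat.le_add_left 1 _
    · exact le_refl 1

lemma segsF_match (P : FOND S A) (π : S → Option A) (σ : S → S) (g : ℕ → S × S)
    (seg0 : ℕ × (ℕ → S)) :
    ∀ m, (segsF P π σ g seg0 (m + 1)).2 0 = (segsF P π σ g seg0 m).2 (segsF P π σ g seg0 m).1 := by
  intro m
  rw [segsF]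
  split
  · next h =>
    have hspec := Classical.choose_spec (reaches_path P π h.1)
    simpa using hspec.1
  · simp

lemma segsF_inv (P : FOND S A) (π : S → Option A) (σ : S → S) (g : ℕ → S × S)
    (seg0 : ℕ × (ℕ → S)) (R : Set S)
    (hR0 : seg0.2 seg0.1 ∈ R)
    (hRstep : ∀ u v, u ∈ R → PStep P π u v → v ∈ R)
    (hσ : ∀ u ∈ R, PStep P π u (σ u))
    (hstep0 : ∀ j < seg0.1, PStep P π (seg0.2 j) (seg0.2 (j + 1))) :
    ∀ m, (segsF P π σ g seg0 m).2 (segsF P π σ g seg0 m).1 ∈ R ∧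
      (∀ j < (segsF P π σ g seg0 m).1,
        PStep P π ((segsF P π σ g seg0 m).2 j) ((segsF P π σ g seg0 m).2 (j + 1))) ∧
      (1 ≤ m → ∀ j ≤ (segsF P π σ g seg0 m).1, (segsF P π σ g seg0 m).2 j ∈ R) := by
  intro m
  induction m with
  | zero => exact ⟨hR0, hstep0, by omega⟩
  | succ m ih =>
    obtain ⟨hend, _, _⟩ := ih
    rw [segsF]
    split
    · next h =>
      have hspec := Classical.choose_spec (reaches_path P π h.1)
      set p := Classical.choose (reaches_path P π h.1) with hp
      obtain ⟨hp0, hpk, hps⟩ := hspec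
      have hmem : ∀ j ≤ p.1, p.2 j ∈ R := by
        intro j hj
        induction j with
        | zero => rw [hp0]; exact hend
        | succ j ihj => exact hRstep _ _ (ihj (by omega)) (hps j (by omega))
      have hstepnew : ∀ j < p.1 + 1,
          PStep P π (if j ≤ p.1 then p.2 j else (g m).2)
            (if j + 1 ≤ p.1 then p.2 (j + 1) else (g m).2) := by
        intro j hj
        rcases Nat.lt_or_ge j p.1 with h1 | h1
        · rw [if_pos (by omega), if_pos (by omega)]
          exact hps j h1
        · have : j = p.1 := by omega
          subst this
          rw [if_pos (le_refl _), if_neg (by omega), hpk]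
          exact h.2
      refine ⟨?_, hstepnew, ?_⟩
      · show (if p.1 + 1 ≤ p.1 then p.2 (p.1 + 1) else (g m).2) ∈ R
        rw [if_neg (by omega)]
        exact hRstep _ _ (hpk ▸ hmem p.1 (le_refl _)) h.2
      · intro _ j hj
        show (if j ≤ p.1 then p.2 j else (g m).2) ∈ R
        split
        · exact hmem j (by assumption)
        · exact hRstep _ _ (hpk ▸ hmem p.1 (le_refl _)) h.2
    · next h =>
      have hu := hσ _ hend
      refine ⟨?_, ?_, ?_⟩
      · dsimp only
        rw [if_neg (by omega : ¬ (1 : ℕ) = 0)]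
        exact hRstep _ _ hend hu
      · intro j hj
        have : j = 0 := by omega
        subst this
        simpa using hu
      · intro _ j hj
        interval_cases j
        · simpa using hend
        · dsimp only
          rw [if_neg (by omega : ¬ (1 : ℕ) = 0)]
          exact hRstep _ _ hend hu

lemma segsF_service (P : FOND S A) (π : S → Option A) (σ : S → S) (g : ℕ → S × S)
    (seg0 : ℕ × (ℕ → S)) (m : ℕ)
    (h : ReachesFrom P π ((segsF P π σ g seg0 m).2 (segsF P π σ g seg0 m).1) (g m).1 ∧
      PStep P π (g m).1 (g m).2) :
    ∃ k, (segsF P π σ g seg0 (m + 1)).1 = k + 1 ∧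
      (segsF P π σ g seg0 (m + 1)).2 k = (g m).1 ∧
      (segsF P π σ g seg0 (m + 1)).2 (k + 1) = (g m).2 := by
  rw [segsF]
  rw [dif_pos h]
  have hspec := Classical.choose_spec (reaches_path P π h.1)
  set p := Classical.choose (reaches_path P π h.1) with hp
  exact ⟨p.1, rfl, by simp [hspec.2.1], by simp⟩

lemma exists_gfun (S : Type) [Finite S] [Nonempty S] :
    ∃ g : ℕ → S × S, ∀ p : S × S, {m | g m = p}.Infinite := by
  have : Countable (S × S) := by infer_instance
  obtain ⟨f, hf⟩ := exists_surjective_nat (S × S)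
  refine ⟨fun n => f (Nat.unpair n).2, fun p => ?_⟩
  obtain ⟨m, hm⟩ := hf p
  apply Set.infinite_of_injective_forall_mem (f := fun j => Nat.pair j m)
  · intro a b hab
    simpa using (Nat.pair_eq_pair.mp hab).1
  · intro j
    simp [Nat.unpair_pair, hm]

end StmtZeroAux

/-- π is a strong-cyclic solution of P iff every maximal π-trajectory
that is fair (all actions fair) reaches a goal state. -/
theorem stmt0 (S A : Type) [Finite S] [Finite A] (P : FOND S A) (hgoal : P.goal.Nonempty)
    (π : S → Option A) (hπ : IsPolicy P π) :
    StrongCyclic P π ↔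
      ∀ τ : Traj S, IsTraj P π τ → MaximalTraj P π τ → FairAll P π τ → ReachesGoal P τ := by
  classical
  constructor
  · -- strong-cyclic implies every fair maximal trajectory reaches the goal
    intro hsc τ hτ hmax hfair
    rcases hmax with hinf | ⟨n, hn, hcase⟩
    · -- infinite trajectory
      have hins : ∀ i : ℕ, τ.Inside i := by
        intro i n hn; rw [hinf] at hn; cases hn
      have hreached : ∀ i, ReachedBy P π (τ.states i) := by
        intro i
        refine ⟨⟨τ.states, some i⟩, ⟨hτ.1, fun i' _ => hτ.2 i' ?_⟩, i, rfl, rfl⟩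
        intro n hn
        rw [hinf] at hn; cases hn
      obtain ⟨t0, ht0⟩ := Finite.exists_infinite_fiber τ.states
      have ht0' : {i | τ.states i = t0}.Infinite := Set.infinite_coe_iff.mp ht0
      have hrec_step : ∀ t v, {i | τ.states i = t}.Infinite → PStep P π t v →
          {i | τ.states i = v}.Infinite := by
        rintro t v ht ⟨a, ha, hv⟩
        have hAll := hfair t ⟨hinf, ht⟩ a ha v hv
        apply nat_unbounded_infinite
        intro N
        obtain ⟨i, hiI, hi⟩ := nat_infinite_exists_gt hAll N
        exact ⟨i + 1, hiI.2, by omega⟩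
      have hclosed : ∀ v, ReachesFrom P π t0 v → {i | τ.states i = v}.Infinite := by
        intro v hv
        induction hv with
        | refl => exact ht0'
        | tail _ h2 ih => exact hrec_step _ _ ih h2
      obtain ⟨i0, hi0⟩ := ht0'.nonempty
      obtain ⟨gs, hgs, hreach⟩ := hsc (τ.states i0) (hreached i0)
      rw [show τ.states i0 = t0 from hi0] at hreach
      obtain ⟨ig, hig⟩ := (hclosed gs hreach).nonempty
      exact ⟨ig, hins ig, by rw [show τ.states ig = gs from hig]; exact hgs⟩
    · -- finite maximal trajectory
      have hins : τ.Inside n := by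
        intro n' hn'; rw [hn] at hn'; injection hn' with h'; omega
      have hrb : ReachedBy P π (τ.states n) := ⟨τ, hτ, n, hn, rfl⟩
      obtain ⟨gs, hgs, hreach⟩ := hsc (τ.states n) hrb
      rcases hcase with ⟨hg', _⟩ | hnone | ⟨a, ha, hnap⟩
      · exact ⟨n, hins, hg'⟩
      · rcases Relation.ReflTransGen.cases_head hreach with heq | ⟨c, ⟨a, ha, _⟩, _⟩
        · exact ⟨n, hins, heq ▸ hgs⟩
        · rw [hnone] at ha; cases ha
      · rcases Relation.ReflTransGen.cases_head hreach with heq | ⟨c, ⟨a', ha', hc'⟩, _⟩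
        · exact ⟨n, hins, heq ▸ hgs⟩
        · rw [ha] at ha'
          injection ha' with h'
          subst h'
          exact absurd ⟨c, hc'⟩ hnap
  · -- every fair maximal trajectory reaching the goal implies strong-cyclic
    intro h s hs
    by_contra hns
    push_neg at hns
    obtain ⟨τ0, hτ0, n0, hlen0, hend0⟩ := hs
    have hsR : ReachesFrom P π s s := Relation.ReflTransGen.refl
    have hRstep : ∀ u v, ReachesFrom P π s u → PStep P π u v → ReachesFrom P π s v :=
      fun u v hu huv => Relation.ReflTransGen.tail hu huv
    have hRng : ∀ t, ReachesFrom P π s t → t ∉ P.goal := fun t ht htg => hns t htg ht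
    have hstep0 : ∀ j < n0, PStep P π (τ0.states j) (τ0.states (j + 1)) := by
      intro j hj
      exact hτ0.2 j (fun n hn => by rw [hlen0] at hn; injection hn with h'; omega)
    have hτ0ng : ∀ i ≤ n0, τ0.states i ∉ P.goal := by
      intro i hi
      rcases Nat.lt_or_ge i n0 with h1 | h1
      · obtain ⟨a, ha, _⟩ := hstep0 i h1
        intro hgoal
        rw [hπ _ hgoal] at ha
        cases ha
      · have : i = n0 := by omega
        subst this
        rw [hend0]
        exact hRng s hsR
    by_cases hall : ∀ t, ReachesFrom P π s t → ∃ a, π t = some a ∧ (P.F a t).Nonempty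
    · -- build an infinite fair trajectory avoiding the goal
      have hσex : ∀ t : S, ∃ v, ReachesFrom P π s t → PStep P π t v := by
        intro t
        by_cases ht : ReachesFrom P π s t
        · obtain ⟨a, ha, v, hv⟩ := hall t ht
          exact ⟨v, fun _ => ⟨a, ha, hv⟩⟩
        · exact ⟨s, fun hc => absurd hc ht⟩
      choose σ hσ using hσex
      have : Nonempty S := ⟨s⟩
      obtain ⟨g, hg⟩ := exists_gfun S
      set seg0 : ℕ × (ℕ → S) := (n0, τ0.states) with hseg0
      set seg : ℕ → ℕ × (ℕ → S) := segsF P π σ g seg0 with hsegdef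
      have hseg00 : seg 0 = seg0 := rfl
      have hlen : ∀ m, 1 ≤ m → 1 ≤ (seg m).1 := segsF_len P π σ g seg0
      have hmatch : ∀ m, (seg (m + 1)).2 0 = (seg m).2 (seg m).1 := segsF_match P π σ g seg0
      have hstep0' : ∀ j < seg0.1, PStep P π (seg0.2 j) (seg0.2 (j + 1)) := hstep0
      have hR0 : ReachesFrom P π s (seg0.2 seg0.1) := by
        show ReachesFrom P π s (τ0.states n0)
        rw [hend0]
        exact hsR
      have hinv := segsF_inv P π σ g seg0 {t | ReachesFrom P π s t} hR0 hRstep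
        (fun u hu => hσ u hu) hstep0'
      rw [← hsegdef] at hinv
      have hstepall : ∀ m j, j < (seg m).1 → PStep P π ((seg m).2 j) ((seg m).2 (j + 1)) :=
        fun m => (hinv m).2.1
      have hoffs1 : offsF seg 1 = n0 := by
        have h1 : offsF seg 1 = offsF seg 0 + (seg 0).1 := rfl
        have h2 : offsF seg 0 = 0 := rfl
        rw [h1, h2, hseg00, hseg0]
        simp
      set τ2 : Traj S := ⟨StF seg, none⟩ with hτ2
      have hTraj : IsTraj P π τ2 := by
        constructor
        · show StF seg 0 = P.init
          have he := StF_eq seg hlen hmatch (m := 0) (i := 0) (le_refl _) (Nat.zero_le _)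
          rw [he, hseg00]
          exact hτ0.1
        · intro i _
          exact StF_step P π seg hlen hmatch hstepall i
      have hmemR : ∀ i, n0 ≤ i → ReachesFrom P π s (StF seg i) := by
        intro i hi
        obtain ⟨g1, g2⟩ := segIdxF_spec seg hlen i
        rcases Nat.eq_zero_or_pos (segIdxF seg i) with hM0 | hMpos
        · rw [hM0, show (0 : ℕ) + 1 = 1 from rfl, hoffs1] at g2
          omega
        · have hlenM : offsF seg (segIdxF seg i + 1) =
              offsF seg (segIdxF seg i) + (seg (segIdxF seg i)).1 := rfl
          exact (hinv (segIdxF seg i)).2.2 hMpos (i - offsF seg (segIdxF seg i)) (by omega)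
      have hFair : FairAll P π τ2 := by
        intro t hrec a ha s' hs'
        obtain ⟨_, hinft⟩ := hrec
        have hinft' : {i | StF seg i = t}.Infinite := hinft
        have hps : PStep P π t s' := ⟨a, ha, hs'⟩
        apply nat_unbounded_infinite
        intro N
        obtain ⟨m, hmI, hm⟩ := nat_infinite_exists_gt (hg (t, s')) N
        have hgm : g m = (t, s') := hmI
        have hoffm : offsF seg (m + 1) = offsF seg m + (seg m).1 := rfl
        have hend : (seg m).2 (seg m).1 = StF seg (offsF seg (m + 1)) := by
          rw [StF_eq seg hlen hmatch (m := m) (offsF_mono seg (Nat.le_succ m)) (le_refl _),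
            show offsF seg (m + 1) - offsF seg m = (seg m).1 by omega]
        have hserve : ReachesFrom P π ((seg m).2 (seg m).1) (g m).1 ∧
            PStep P π (g m).1 (g m).2 := by
          rw [hgm]
          refine ⟨?_, hps⟩
          obtain ⟨i, hiI, hi⟩ := nat_infinite_exists_gt hinft' (offsF seg (m + 1))
          have hiI' : StF seg i = t := hiI
          rw [hend, ← hiI']
          exact StF_reaches P π seg hlen hmatch hstepall _ i (le_of_lt hi)
        obtain ⟨k, hk1, hk2, hk3⟩ := segsF_service P π σ g seg0 m hserve
        rw [← hsegdef] at hk1 hk2 hk3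
        have hoffsu : offsF seg (m + 1 + 1) = offsF seg (m + 1) + (seg (m + 1)).1 := rfl
        have hb1 : StF seg (offsF seg (m + 1) + k) = t := by
          rw [StF_eq seg hlen hmatch (m := m + 1) (Nat.le_add_right _ _) (by omega)]
          rw [show offsF seg (m + 1) + k - offsF seg (m + 1) = k by omega]
          rw [hk2, hgm]
        have hb2 : StF seg (offsF seg (m + 1) + k + 1) = s' := by
          rw [StF_eq seg hlen hmatch (m := m + 1) (by omega) (by omega)]
          rw [show offsF seg (m + 1) + k + 1 - offsF seg (m + 1) = k + 1 by omega]
          rw [hk3, hgm]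
        refine ⟨offsF seg (m + 1) + k, ⟨hb1, hb2⟩, ?_⟩
        have := offsF_ge seg hlen m
        omega
      obtain ⟨i, _, hgoal'⟩ := h τ2 hTraj (Or.inl rfl) hFair
      rcases le_or_gt i n0 with h1 | h1
      · have he := StF_eq seg hlen hmatch (m := 0) (i := i) (Nat.zero_le _)
          (by rw [show (0 : ℕ) + 1 = 1 from rfl, hoffs1]; exact h1)
        have hgoal'' : StF seg i ∈ P.goal := hgoal'
        rw [he, hseg00] at hgoal''
        have : τ0.states i ∈ P.goal := by
          simpa [show offsF seg 0 = 0 from rfl, hseg0] using hgoal''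
        exact hτ0ng i h1 this
      · exact hRng _ (hmemR i (le_of_lt h1)) hgoal'
    · -- some reachable state is stuck: finite maximal fair trajectory avoiding the goal
      push_neg at hall
      obtain ⟨t, htR, hbad⟩ := hall
      obtain ⟨⟨k, w⟩, hw0, hwk, hws⟩ := reaches_path P π htR
      dsimp only at hw0 hwk hws
      have hwmem : ∀ j ≤ k, ReachesFrom P π s (w j) := path_mem_reach P π w hw0 hws
      set st : ℕ → S := fun i => if i ≤ n0 then τ0.states i else w (i - n0) with hst
      set τ1 : Traj S := ⟨st, some (n0 + k)⟩ with hτ1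
      have hstn0 : ∀ j, 1 ≤ j → st (n0 + j) = w j := by
        intro j hj
        show (if n0 + j ≤ n0 then τ0.states (n0 + j) else w (n0 + j - n0)) = w j
        rw [if_neg (by omega), show n0 + j - n0 = j by omega]
      have hst0 : ∀ i ≤ n0, st i = τ0.states i := by
        intro i hi
        show (if i ≤ n0 then τ0.states i else w (i - n0)) = τ0.states i
        rw [if_pos hi]
      have hstw : ∀ j ≤ k, st (n0 + j) = w j := by
        intro j hj
        rcases Nat.eq_zero_or_pos j with h0 | h0
        · subst h0
          rw [show n0 + 0 = n0 by omega, hst0 n0 (le_refl _), hend0, ← hw0]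
        · exact hstn0 j h0
      have hTraj1 : IsTraj P π τ1 := by
        constructor
        · show st 0 = P.init
          rw [hst0 0 (Nat.zero_le _)]
          exact hτ0.1
        · intro i hi
          have hiN : i < n0 + k := hi (n0 + k) rfl
          rcases Nat.lt_or_ge i n0 with h1 | h1
          · show ∃ a, π (st i) = some a ∧ st (i + 1) ∈ P.F a (st i)
            rw [hst0 i (by omega), hst0 (i + 1) (by omega)]
            exact hstep0 i h1
          · show ∃ a, π (st i) = some a ∧ st (i + 1) ∈ P.F a (st i)
            have e1 : st i = w (i - n0) := by
              have h5 := hstw (i - n0) (by omega)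
              rw [show n0 + (i - n0) = i by omega] at h5
              exact h5
            have e2 : st (i + 1) = w (i - n0 + 1) := by
              have h5 := hstw (i - n0 + 1) (by omega)
              rw [show n0 + (i - n0 + 1) = i + 1 by omega] at h5
              exact h5
            rw [e1, e2]
            exact hws (i - n0) (by omega)
      have hstend : st (n0 + k) = t := by
        rw [hstw k (le_refl _), hwk]
      have hMax1 : MaximalTraj P π τ1 := by
        refine Or.inr ⟨n0 + k, rfl, ?_⟩
        rcases ho : π t with _ | a
        · exact Or.inr (Or.inl (by rw [show τ1.states (n0 + k) = t from hstend, ho]))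
        · refine Or.inr (Or.inr ⟨a, by rw [show τ1.states (n0 + k) = t from hstend, ho], ?_⟩)
          rw [show τ1.states (n0 + k) = t from hstend]
          intro hap
          have h5 : (P.F a t).Nonempty := hap
          rw [hbad a ho] at h5
          exact Set.not_nonempty_empty h5
      have hFair1 : FairAll P π τ1 := by
        intro u hu
        obtain ⟨hln, _⟩ := hu
        cases hln
      obtain ⟨i, hiIn, hgoal'⟩ := h τ1 hTraj1 hMax1 hFair1
      have hiN : i ≤ n0 + k := hiIn (n0 + k) rfl
      have hgoal'' : st i ∈ P.goal := hgoal'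
      rcases le_or_gt i n0 with h1 | h1
      · rw [hst0 i h1] at hgoal''
        exact hτ0ng i h1 hgoal''
      · have h5 := hstw (i - n0) (by omega)
        rw [show n0 + (i - n0) = i by omega] at h5
        rw [h5] at hgoal''
        exact hRng _ (hwmem (i - n0) (by omega)) hgoal''
end

section
/- Let τ be an infinite fair π-trajectory of a FOND problem P, let s be a recurrent state of τ, and suppose π reaches s' from s. Then s' occurs infinitely often in τ (in particular, τ visits every state that is reachable via π from any of its recurrent states). -/
open FondPaper

/-- if τ is an infinite fair π-trajectory, s is recurrent in τ, and
π reaches s' from s, then s' occurs infinitely often in τ. -/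
theorem stmt1 (S A : Type) [Finite S] [Finite A] (P : FOND S A) (hgoal : P.goal.Nonempty)
    (π : S → Option A) (hπ : IsPolicy P π) (τ : Traj S) (hτ : IsTraj P π τ)
    (hinf : τ.len = none) (hfair : FairAll P π τ) (s s' : S)
    (hrec : RecurrentIn τ s) (hreach : ReachesFrom P π s s') :
    {i | τ.states i = s'}.Infinite := by
  induction hreach with
  | refl => exact hrec.2
  | tail h hstep ih =>
    obtain ⟨a, ha, hmem⟩ := hstep
    have h2 := hfair _ ⟨hinf, ih⟩ a ha _ hmem
    exact (h2.image (Set.injOn_of_injective (add_left_injective 1))).mono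
      (by rintro j ⟨i, ⟨_, hi⟩, rfl⟩; exact hi)
end

section
/- For any FOND problem P and any policy π: π is a strong solution of P if and only if π is a strong-cyclic solution of P and π is acyclic, i.e., no π-trajectory visits the same state more than once. -/
open FondPaper

section Aux

variable {S A : Type}

lemma aux_nonGoal (P : FOND S A) (π : S → Option A) (hπ : IsPolicy P π)
    {τ : Traj S} (hτ : IsTraj P π τ) {i : ℕ} (hi : τ.HasStep i) :
    τ.states i ∉ P.goal := by
  intro hg
  obtain ⟨a, ha, _⟩ := hτ.2 i hi
  rw [hπ _ hg] at ha
  cases ha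

lemma aux_reachedBy_step (P : FOND S A) (π : S → Option A) {s s' : S}
    (hs : ReachedBy P π s) (hstep : PStep P π s s') : ReachedBy P π s' := by
  obtain ⟨τ, hτ, n, hlen, hend⟩ := hs
  refine ⟨⟨fun k => if k ≤ n then τ.states k else s', some (n + 1)⟩, ⟨?_, ?_⟩, n + 1, rfl, ?_⟩
  · simpa using hτ.1
  · intro i hi
    have hi' : i ≤ n := by have := hi (n + 1) rfl; omega
    rcases lt_or_eq_of_le hi' with h | h
    · have hstepi := hτ.2 i (fun m hm => by rw [hlen] at hm; injection hm with hm; omega)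
      obtain ⟨a, ha, hmem⟩ := hstepi
      exact ⟨a, by simpa [hi'] using ha, by simpa [hi', Nat.succ_le_of_lt h] using hmem⟩
    · subst h
      obtain ⟨a, ha, hmem⟩ := hstep
      refine ⟨a, ?_, ?_⟩
      · simpa [hend] using ha
      · simpa [hend, Nat.lt_irrefl] using hmem
  · simp

/-- Under a strong solution, every reached non-goal state has a policy successor. -/
lemma aux_hasSucc (P : FOND S A) (π : S → Option A) (hπ : IsPolicy P π)
    (hst : Strong P π) {t : S} (ht : ReachedBy P π t) (hng : t ∉ P.goal) :
    ∃ s', PStep P π t s' := by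
  by_contra hns
  obtain ⟨τ, hτ, n, hlen, hend⟩ := ht
  have hmax : MaximalTraj P π τ := by
    refine Or.inr ⟨n, hlen, Or.inr ?_⟩
    obtain hpt | ⟨a, hpt⟩ := (π (τ.states n)).eq_none_or_eq_some
    · exact Or.inl hpt
    · refine Or.inr ⟨a, hpt, fun hap => ?_⟩
      obtain ⟨s', hs'⟩ := hap
      exact hns ⟨s', a, by rwa [hend] at hpt, by rwa [hend] at hs'⟩
  obtain ⟨i, hin, hig⟩ := hst τ hτ hmax
  have hi' : i ≤ n := hin n hlen
  rcases lt_or_eq_of_le hi' with h | h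
  · exact aux_nonGoal P π hπ hτ (fun m hm => by rw [hlen] at hm; injection hm with hm; omega) hig
  · subst h; rw [hend] at hig; exact hng hig
end Aux

/-- π is a strong solution of P iff π is a strong-cyclic solution of P
and no π-trajectory visits the same state more than once. -/
theorem stmt2 (S A : Type) [Finite S] [Finite A] (P : FOND S A) (hgoal : P.goal.Nonempty)
    (π : S → Option A) (hπ : IsPolicy P π) :
    Strong P π ↔ StrongCyclic P π ∧ AcyclicPolicy P π := by
  constructor
  · intro hst
    constructor
    · -- Strong → StrongCyclic
      intro s hs
      by_contra hng
      push_neg at hng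
      -- every state reachable from s is reached, and no goal reachable from it
      have key : ∀ t, ReachesFrom P π s t →
          ReachedBy P π t ∧ ∀ g ∈ P.goal, ¬ ReachesFrom P π t g := by
        intro t hr
        induction hr with
        | refl => exact ⟨hs, hng⟩
        | tail h1 h2 ih =>
          refine ⟨aux_reachedBy_step P π ih.1 h2, fun g hg hrg => ?_⟩
          exact ih.2 g hg (Relation.ReflTransGen.head h2 hrg)
      have hnext : ∀ t : S, ∃ s', ReachesFrom P π s t →
          PStep P π t s' ∧ ReachesFrom P π s s' := by
        intro t
        by_cases hr : ReachesFrom P π s t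
        · obtain ⟨hrb, hngt⟩ := key t hr
          have htg : t ∉ P.goal := fun h => hngt t h Relation.ReflTransGen.refl
          obtain ⟨s', hs'⟩ := aux_hasSucc P π hπ hst hrb htg
          exact ⟨s', fun _ => ⟨hs', Relation.ReflTransGen.tail hr hs'⟩⟩
        · exact ⟨P.init, fun h => absurd h hr⟩
      choose next hnextp using hnext
      set u : ℕ → S := fun k => next^[k] s with hu
      have hureach : ∀ k, ReachesFrom P π s (u k) := by
        intro k
        induction k with
        | zero => exact Relation.ReflTransGen.refl
        | succ k ih =>
          have : u (k + 1) = next (u k) := Function.iterate_succ_apply' next k s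
          rw [this]
          exact (hnextp (u k) ih).2
      have hustep : ∀ k, PStep P π (u k) (u (k + 1)) := by
        intro k
        have : u (k + 1) = next (u k) := Function.iterate_succ_apply' next k s
        rw [this]
        exact (hnextp (u k) (hureach k)).1
      obtain ⟨τ, hτ, n, hlen, hend⟩ := hs
      set σ : Traj S := ⟨fun k => if k ≤ n then τ.states k else u (k - n), none⟩ with hσ
      have hσeq : ∀ k, n ≤ k → σ.states k = u (k - n) := by
        intro k hk
        rcases lt_or_eq_of_le hk with h | h
        · simp [hσ, Nat.not_le_of_lt h]
        · subst h
          simp [hσ, hend, hu]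
      have hσtraj : IsTraj P π σ := by
        constructor
        · simpa [hσ] using hτ.1
        · intro i _
          rcases lt_or_ge i n with h | h
          · have hstepi := hτ.2 i (fun m hm => by rw [hlen] at hm; injection hm with hm; omega)
            obtain ⟨a, ha, hmem⟩ := hstepi
            exact ⟨a, by simpa [hσ, le_of_lt h] using ha,
              by simpa [hσ, le_of_lt h, Nat.succ_le_of_lt h] using hmem⟩
          · rw [hσeq i h, hσeq (i + 1) (le_trans h (Nat.le_succ i))]
            have : i + 1 - n = (i - n) + 1 := by omega
            rw [this]
            exact hustep (i - n)
      obtain ⟨i, _, hig⟩ := hst σ hσtraj (Or.inl rfl)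
      rcases lt_or_ge i n with h | h
      · have : σ.states i = τ.states i := by simp [hσ, le_of_lt h]
        rw [this] at hig
        exact aux_nonGoal P π hπ hτ
          (fun m hm => by rw [hlen] at hm; injection hm with hm; omega) hig
      · rw [hσeq i h] at hig
        exact (key (u (i - n)) (hureach (i - n))).2 _ hig Relation.ReflTransGen.refl
    · -- Strong → AcyclicPolicy
      intro τ hτ i j hi hj heq
      by_contra hne
      -- reduce to the case i < j
      have claim : ∀ i j : ℕ, i < j → τ.Inside j → τ.states i = τ.states j → False := by
        clear hi hj heq hne
        intro i j hij hj heq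
        have hstep : ∀ k, k < j → τ.HasStep k := by
          intro k hk m hm
          exact lt_of_lt_of_le hk (hj m hm)
        -- cyclic index function
        set φ : ℕ → ℕ := fun m => Nat.rec 0 (fun _ p => if p + 1 = j then i else p + 1) m
          with hφdef
        have hφ0 : φ 0 = 0 := rfl
        have hφs : ∀ m, φ (m + 1) = if φ m + 1 = j then i else φ m + 1 := fun m => rfl
        have hφlt : ∀ m, φ m < j := by
          intro m
          induction m with
          | zero => rw [hφ0]; omega
          | succ m ih =>
            rw [hφs m]
            split
            · exact hij
            · omega
        set σ : Traj S := ⟨fun m => τ.states (φ m), none⟩ with hσ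
        have hσtraj : IsTraj P π σ := by
          constructor
          · simpa [hσ, hφ0] using hτ.1
          · intro m _
            obtain ⟨a, ha, hmem⟩ := hτ.2 (φ m) (hstep (φ m) (hφlt m))
            refine ⟨a, ha, ?_⟩
            show τ.states (φ (m + 1)) ∈ P.F a (τ.states (φ m))
            rw [hφs m]
            split_ifs with h
            · rw [heq, ← h]; exact hmem
            · exact hmem
        obtain ⟨k, _, hkg⟩ := hst σ hσtraj (Or.inl rfl)
        exact aux_nonGoal P π hπ hτ (hstep (φ k) (hφlt k)) hkg
      rcases lt_trichotomy i j with h | h | h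
      · exact claim i j h hj heq
      · exact hne h
      · exact claim j i h hi heq.symm
  · -- StrongCyclic ∧ Acyclic → Strong
    rintro ⟨hsc, hac⟩ τ hτ hmax
    cases hlen : τ.len with
    | none =>
      exfalso
      have hinj : Function.Injective τ.states := by
        intro i j h
        exact hac τ hτ i j (fun m hm => by rw [hlen] at hm; cases hm)
          (fun m hm => by rw [hlen] at hm; cases hm) h
      exact (Finite.of_injective τ.states hinj).false
    | some n =>
      have hrb : ReachedBy P π (τ.states n) := ⟨τ, hτ, n, hlen, rfl⟩
      obtain ⟨g, hg, hrg⟩ := hsc _ hrb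
      have hins : τ.Inside n := fun m hm => by rw [hlen] at hm; injection hm with hm; omega
      rcases hmax with h | ⟨m, hm, hcase⟩
      · rw [hlen] at h; cases h
      · have hmn : n = m := by rw [hlen] at hm; exact Option.some.inj hm
        subst hmn
        rcases hcase with ⟨hgoal', _⟩ | hnone | ⟨a, ha, hna⟩
        · exact ⟨n, hins, hgoal'⟩
        · rcases Relation.ReflTransGen.cases_head hrg with h | ⟨c, ⟨a, ha, _⟩, _⟩
          · exact ⟨n, hins, h ▸ hg⟩
          · rw [hnone] at ha; cases ha
        · rcases Relation.ReflTransGen.cases_head hrg with h | ⟨c, ⟨a', ha', hmem⟩, _⟩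
          · exact ⟨n, hins, h ▸ hg⟩
          · rw [ha] at ha'
            injection ha' with haa
            subst haa
            exact absurd ⟨c, hmem⟩ hna
end

section
/- For any FOND problem P and any policy π: π is a strong-cyclic solution of P if and only if π solves the FOND+ problem ⟨P, {A/∅}⟩, where A is the set of all non-deterministic actions of P (actions a such that |F(a,s)| ≥ 2 for some state s) and the B-part of the constraint is empty. -/
open FondPaper

section Aux


variable {S A : Type}

/-- Pigeonhole: an infinite index set maps into a finite type, some fiber is infinite. -/
lemma aux_infinite_fiber {α : Type} [Finite α] {I : Set ℕ} (hI : I.Infinite) (g : ℕ → α) :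
    ∃ x, {i | i ∈ I ∧ g i = x}.Infinite := by
  by_contra h
  push_neg at h
  have : I ⊆ ⋃ x, {i | i ∈ I ∧ g i = x} := fun i hi => Set.mem_iUnion.2 ⟨g i, hi, rfl⟩
  have hfin : (⋃ x, {i | i ∈ I ∧ g i = x}).Finite :=
    Set.finite_iUnion (fun x => h x)
  exact hI (hfin.subset this)

/-- An enumeration of a nonempty countable set hitting each element infinitely often. -/
lemma aux_exists_enum {α : Type} [Countable α] (s : Set α) (hs : s.Nonempty) :
    ∃ f : ℕ → α, (∀ k, f k ∈ s) ∧ ∀ v ∈ s, {k | f k = v}.Infinite := by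
  have : Nonempty s := hs.to_subtype
  obtain ⟨g, hg⟩ := exists_surjective_nat s
  refine ⟨fun k => (g (Nat.unpair k).1 : α), fun k => (g _).2, fun v hv => ?_⟩
  obtain ⟨m, hm⟩ := hg ⟨v, hv⟩
  apply Set.infinite_of_injective_forall_mem (f := fun j : ℕ => Nat.pair m j)
  · intro a b hab
    have := congrArg Nat.unpair hab
    simpa [Nat.unpair_pair] using this
  · intro j
    show (g (Nat.unpair (Nat.pair m j)).1 : α) = v
    rw [Nat.unpair_pair]
    exact congrArg Subtype.val hm

/-- The extension trajectory: current state together with visit counts. -/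
noncomputable def extTraj [DecidableEq S] (nxt : S → ℕ → S) (s : S) : ℕ → S × (S → ℕ)
  | 0 => (s, fun u => if u = s then 1 else 0)
  | (j+1) =>
      let p := extTraj nxt s j
      let v := nxt p.1 (p.2 p.1 - 1)
      (v, fun w => if w = v then p.2 v + 1 else p.2 w)

variable [DecidableEq S] {nxt : S → ℕ → S} {s : S}

lemma extTraj_state_succ (j : ℕ) :
    (extTraj nxt s (j+1)).1 = nxt (extTraj nxt s j).1 ((extTraj nxt s j).2 (extTraj nxt s j).1 - 1) := rfl

lemma extTraj_cnt_succ (j : ℕ) (w : S) :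
    (extTraj nxt s (j+1)).2 w =
      if w = (extTraj nxt s (j+1)).1 then (extTraj nxt s j).2 ((extTraj nxt s (j+1)).1) + 1
      else (extTraj nxt s j).2 w := rfl

lemma extTraj_cnt_pos (j : ℕ) : 1 ≤ (extTraj nxt s j).2 (extTraj nxt s j).1 := by
  cases j with
  | zero => simp [extTraj]
  | succ j => rw [extTraj_cnt_succ]; simp

lemma extTraj_cnt_mono_step (j : ℕ) (u : S) :
    (extTraj nxt s j).2 u ≤ (extTraj nxt s (j+1)).2 u := by
  rw [extTraj_cnt_succ]
  split
  · next h => subst h; omega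
  · exact le_refl _

lemma extTraj_cnt_le_succ (j : ℕ) (u : S) :
    (extTraj nxt s (j+1)).2 u ≤ (extTraj nxt s j).2 u + 1 := by
  rw [extTraj_cnt_succ]
  split
  · next h => subst h; omega
  · omega

lemma extTraj_cnt_mono {j j' : ℕ} (h : j ≤ j') (u : S) :
    (extTraj nxt s j).2 u ≤ (extTraj nxt s j').2 u := by
  induction h with
  | refl => exact le_refl _
  | step h ih => exact le_trans ih (extTraj_cnt_mono_step _ u)

lemma extTraj_cnt_incr_iff (j : ℕ) (u : S) :
    (extTraj nxt s (j+1)).2 u = (extTraj nxt s j).2 u + 1 ↔ (extTraj nxt s (j+1)).1 = u := by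
  rw [extTraj_cnt_succ]
  constructor
  · intro h
    by_contra hne
    rw [if_neg (fun he => hne he.symm)] at h
    omega
  · intro h
    rw [if_pos h.symm, h]

lemma extTraj_cnt_zero (u : S) : (extTraj nxt s 0).2 u = if u = s then 1 else 0 := rfl

/-- If `u` is visited infinitely often, its count is unbounded. -/
lemma extTraj_cnt_unbounded (hV : {j | (extTraj nxt s j).1 = u}.Infinite) (m : ℕ) :
    ∃ j, m ≤ (extTraj nxt s j).2 u := by
  induction m with
  | zero => exact ⟨0, Nat.zero_le _⟩
  | succ m ih =>
    obtain ⟨j, hj⟩ := ih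
    obtain ⟨j', hj'V, hjj'⟩ := hV.exists_gt j
    obtain ⟨j'', rfl⟩ : ∃ j'', j' = j'' + 1 := ⟨j' - 1, by omega⟩
    refine ⟨j'' + 1, ?_⟩
    have h1 : (extTraj nxt s (j''+1)).2 u = (extTraj nxt s j'').2 u + 1 :=
      (extTraj_cnt_incr_iff j'' u).2 hj'V
    have h2 : (extTraj nxt s j).2 u ≤ (extTraj nxt s j'').2 u := extTraj_cnt_mono (by omega) u
    omega

/-- Every positive count value `m` is attained at a visit time to `u`. -/
lemma extTraj_visit_with_cnt {u : S} (hV : {j | (extTraj nxt s j).1 = u}.Infinite)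
    (m : ℕ) (hm : 1 ≤ m) :
    ∃ j, (extTraj nxt s j).1 = u ∧ (extTraj nxt s j).2 u = m := by
  have hex : ∃ j, m ≤ (extTraj nxt s j).2 u := extTraj_cnt_unbounded hV m
  have hj0 : m ≤ (extTraj nxt s (Nat.find hex)).2 u := Nat.find_spec hex
  cases hcase : Nat.find hex with
  | zero =>
    rw [hcase] at hj0
    rw [extTraj_cnt_zero] at hj0
    by_cases hus : u = s
    · refine ⟨0, ?_, ?_⟩
      · simpa [extTraj] using hus.symm
      · rw [extTraj_cnt_zero, if_pos hus]; rw [if_pos hus] at hj0; omega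
    · rw [if_neg hus] at hj0; omega
  | succ j' =>
    rw [hcase] at hj0
    have hlt : (extTraj nxt s j').2 u < m := by
      have := Nat.find_min hex (by omega : j' < Nat.find hex)
      omega
    have hle : (extTraj nxt s (j'+1)).2 u ≤ (extTraj nxt s j').2 u + 1 := extTraj_cnt_le_succ j' u
    have heq : (extTraj nxt s (j'+1)).2 u = (extTraj nxt s j').2 u + 1 := by omega
    exact ⟨j'+1, (extTraj_cnt_incr_iff j' u).1 heq, by omega⟩

end Aux

section Aux2
variable {S : Type} [DecidableEq S] {nxt : S → ℕ → S} {s : S}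

lemma extTraj_infinite_pairs {u v : S} (hV : {j | (extTraj nxt s j).1 = u}.Infinite)
    (hK : {k | nxt u k = v}.Infinite) :
    {j | (extTraj nxt s j).1 = u ∧ (extTraj nxt s (j+1)).1 = v}.Infinite := by
  have hch : ∀ k : ℕ, ∃ j, (extTraj nxt s j).1 = u ∧ (extTraj nxt s j).2 u = k + 1 :=
    fun k => extTraj_visit_with_cnt hV (k+1) (by omega)
  choose jf hjf1 hjf2 using hch
  apply Set.infinite_of_injOn_mapsTo (f := jf) ?_ ?_ hK
  · intro a _ b _ hab
    have h1 := hjf2 a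
    rw [hab, hjf2 b] at h1
    omega
  · intro k hk
    refine ⟨hjf1 k, ?_⟩
    rw [extTraj_state_succ, hjf1 k, hjf2 k]
    simpa using hk

lemma aux_rtg_path {R : S → S → Prop} {s u : S} (h : Relation.ReflTransGen R s u) :
    ∃ m, ∃ t : ℕ → S, t 0 = s ∧ (∀ i, m ≤ i → t i = u) ∧ ∀ i < m, R (t i) (t (i+1)) := by
  induction h with
  | refl => exact ⟨0, fun _ => s, rfl, fun i _ => rfl, fun i hi => absurd hi (by omega)⟩
  | @tail b c hsb hbc ih =>
    obtain ⟨m, t, h0, hend, hstepp⟩ := ih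
    refine ⟨m+1, fun i => if i ≤ m then t i else c, ?_, ?_, ?_⟩
    · simpa using h0
    · intro i hi
      dsimp only
      rw [if_neg (by omega)]
    · intro i hi
      dsimp only
      rcases Nat.lt_or_ge i m with h' | h'
      · rw [if_pos (by omega), if_pos (by omega)]
        exact hstepp i h'
      · have : i = m := by omega
        subst this
        rw [if_pos (le_refl _), if_neg (by omega), hend _ (le_refl _)]
        exact hbc

end Aux2

/-- π is a strong-cyclic solution of P iff π solves the FOND+ problem
⟨P, {A/∅}⟩ where A is the set of all non-deterministic actions of P. -/
theorem stmt4 (S A : Type) [Finite S] [Finite A] (P : FOND S A) (hgoal : P.goal.Nonempty)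
    (π : S → Option A) (hπ : IsPolicy P π) :
    StrongCyclic P π ↔
      SolvesPlus P ({(NonDetActs P, (∅ : Set A))} : Set (Set A × Set A)) π := by
  classical
  constructor
  · -- Strong cyclic ⇒ solves FOND+
    intro hSC τ hT hMax hFair
    cases hlen : τ.len with
    | some n =>
      rcases hMax with hinf | ⟨n', hn', hcase⟩
      · rw [hlen] at hinf; cases hinf
      rw [hlen] at hn'
      have hnn : n = n' := Option.some.inj hn'
      subst hnn
      have hInside : τ.Inside n := by
        intro m hm
        rw [hlen] at hm
        exact le_of_eq (Option.some.inj hm)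
      have hRB : ReachedBy P π (τ.states n) := ⟨τ, hT, n, hlen, rfl⟩
      rcases hcase with ⟨hg, -⟩ | hnone | ⟨a, hπa, hnap⟩
      · exact ⟨n, hInside, hg⟩
      · obtain ⟨g, hgg, hrtg⟩ := hSC _ hRB
        rcases hrtg.cases_head with heq | ⟨c, ⟨a, hπ', -⟩, -⟩
        · exact ⟨n, hInside, heq ▸ hgg⟩
        · rw [hnone] at hπ'; cases hπ'
      · obtain ⟨g, hgg, hrtg⟩ := hSC _ hRB
        rcases hrtg.cases_head with heq | ⟨c, ⟨a', hπ', hmem⟩, -⟩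
        · exact ⟨n, hInside, heq ▸ hgg⟩
        · rw [hπa] at hπ'
          have : a = a' := Option.some.inj hπ'
          subst this
          exact absurd ⟨c, hmem⟩ hnap
    | none =>
      have hstep : ∀ i, ∃ a, π (τ.states i) = some a ∧ τ.states (i+1) ∈ P.F a (τ.states i) :=
        fun i => hT.2 i (fun m hm => by rw [hlen] at hm; cases hm)
      -- there is a recurrent state
      obtain ⟨u0, hu0⟩ := aux_infinite_fiber Set.infinite_univ τ.states
      have hu0rec : RecurrentIn τ u0 := ⟨hlen, hu0.mono (fun i hi => hi.2)⟩
      -- recurrent states are closed under policy steps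
      have hRclosed : ∀ u, RecurrentIn τ u → ∀ v, PStep P π u v → RecurrentIn τ v := by
        rintro u ⟨-, hu⟩ v ⟨a, hπa, hv⟩
        by_cases hND : a ∈ NonDetActs P
        · have hocc : FairOcc ({(NonDetActs P, (∅ : Set A))} : Set (Set A × Set A)) π τ u :=
            ⟨(NonDetActs P, (∅ : Set A)), Set.mem_singleton _, ⟨a, hπa, hND⟩,
              fun b hb => absurd hb (Set.notMem_empty b)⟩
          have h2 := hFair u ⟨hlen, hu⟩ hocc a hπa v hv
          refine ⟨hlen, ?_⟩
          have himg := h2.image (f := fun i => i + 1) (fun a _ b _ h => Nat.add_right_cancel h)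
          exact himg.mono (by rintro _ ⟨i, ⟨h1, h2⟩, rfl⟩; exact h2)
        · have hdet : ∀ w w1 w2, w1 ∈ P.F a w → w2 ∈ P.F a w → w1 = w2 := by
            simp only [NonDetActs, Set.mem_setOf_eq] at hND
            push_neg at hND
            exact hND
          refine ⟨hlen, ?_⟩
          have himg := hu.image (f := fun i => i + 1) (fun a _ b _ h => Nat.add_right_cancel h)
          refine himg.mono ?_
          rintro _ ⟨i, hi, rfl⟩
          obtain ⟨a', hπ', hmem⟩ := hstep i
          rw [hi] at hπ' hmem
          rw [hπa] at hπ'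
          have : a = a' := Option.some.inj hπ'
          subst this
          exact hdet u _ v hmem hv
      -- u0 is reached by π
      obtain ⟨i0, hi0⟩ := hu0rec.2.nonempty
      have hRB : ReachedBy P π u0 :=
        ⟨⟨τ.states, some i0⟩, ⟨hT.1, fun j _ => hstep j⟩, i0, rfl, hi0⟩
      obtain ⟨g, hgg, hrtg⟩ := hSC u0 hRB
      have key : ∀ w, ReachesFrom P π u0 w → RecurrentIn τ w := by
        intro w h
        induction h with
        | refl => exact hu0rec
        | tail h1 h2 ih => exact hRclosed _ ih _ h2
      have hgrec : RecurrentIn τ g := key g hrtg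
      obtain ⟨ig, hig⟩ := hgrec.2.nonempty
      refine ⟨ig, ?_, hig ▸ hgg⟩
      intro m hm
      rw [hlen] at hm
      cases hm
  · -- solves FOND+ ⇒ strong cyclic
    intro hSP s hs
    by_contra hng
    push_neg at hng
    obtain ⟨τ0, hT0, n, hlen0, hend0⟩ := hs
    have hnotgoal : ∀ u, ReachesFrom P π s u → u ∉ P.goal := fun u hru hgu => hng u hgu hru
    have hpre : ∀ i < n, τ0.states i ∉ P.goal := by
      intro i hi hgi
      obtain ⟨a, hπa, -⟩ := hT0.2 i (fun m hm => by
        rw [hlen0] at hm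
        exact (Option.some.inj hm) ▸ hi)
      rw [hπ _ hgi] at hπa
      cases hπa
    by_cases hcase : ∀ u, ReachesFrom P π s u → ∃ a, π u = some a ∧ (P.F a u).Nonempty
    · -- Case B: build an infinite fair trajectory avoiding the goal
      have hch : ∀ u : S, ∃ f : ℕ → S, (∃ a, π u = some a ∧ (P.F a u).Nonempty) →
          ((∀ k, PStep P π u (f k)) ∧
            ∀ a, π u = some a → ∀ v ∈ P.F a u, {k | f k = v}.Infinite) := by
        intro u
        by_cases hu : ∃ a, π u = some a ∧ (P.F a u).Nonempty
        · obtain ⟨a, hπa, hne⟩ := hu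
          obtain ⟨f, hf1, hf2⟩ := aux_exists_enum (P.F a u) hne
          refine ⟨f, fun _ => ⟨fun k => ⟨a, hπa, hf1 k⟩, ?_⟩⟩
          intro a' hπ' v hv
          rw [hπa] at hπ'
          have : a = a' := Option.some.inj hπ'
          subst this
          exact hf2 v hv
        · exact ⟨fun _ => u, fun h => absurd h hu⟩
      choose nxt hnxt using hch
      have hreach_e : ∀ j, ReachesFrom P π s ((extTraj nxt s j).1) := by
        intro j
        induction j with
        | zero => exact Relation.ReflTransGen.refl
        | succ j ih =>
          refine ih.tail ?_
          rw [extTraj_state_succ]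
          exact (hnxt _ (hcase _ ih)).1 _
      have hstep_e : ∀ j, PStep P π ((extTraj nxt s j).1) ((extTraj nxt s (j+1)).1) := by
        intro j
        rw [extTraj_state_succ]
        exact (hnxt _ (hcase _ (hreach_e j))).1 _
      set σ : ℕ → S := fun i => if i < n then τ0.states i else (extTraj nxt s (i-n)).1 with hσ
      have hσn : ∀ j, σ (j + n) = (extTraj nxt s j).1 := by
        intro j
        rw [hσ]
        dsimp only
        rw [if_neg (by omega)]
        have h' : j + n - n = j := by omega
        rw [h']
      have hσlt : ∀ i < n, σ i = τ0.states i := by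
        intro i hi
        rw [hσ]
        dsimp only
        rw [if_pos hi]
      have hσge : ∀ i, n ≤ i → σ i = (extTraj nxt s (i - n)).1 := by
        intro i hi
        rw [hσ]
        dsimp only
        rw [if_neg (by omega)]
      have hσns : σ n = s := by
        have := hσn 0
        simpa [extTraj] using this
      set τ2 : Traj S := ⟨σ, none⟩ with hτ2
      have hT2 : IsTraj P π τ2 := by
        constructor
        · show σ 0 = P.init
          rcases Nat.eq_zero_or_pos n with h0 | h0
          · rw [h0] at hend0
            rw [show (0:ℕ) = n from h0.symm, hσns, ← hend0]
            exact hT0.1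
          · rw [hσlt 0 h0]
            exact hT0.1
        · intro i _
          show ∃ a, π (σ i) = some a ∧ σ (i+1) ∈ P.F a (σ i)
          rcases Nat.lt_or_ge (i+1) n with h1 | h1
          · rw [hσlt i (by omega), hσlt (i+1) h1]
            exact hT0.2 i (fun m hm => by
              rw [hlen0] at hm
              have := Option.some.inj hm
              omega)
          · rcases Nat.lt_or_ge i n with h2 | h2
            · have hin : i + 1 = n := by omega
              have hstp := hT0.2 i (fun m hm => by
                rw [hlen0] at hm
                have := Option.some.inj hm
                omega)
              rw [hσlt i h2, hin, hσns, ← hend0]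
              rw [hin] at hstp
              exact hstp
            · rw [hσge i h2, hσge (i+1) (by omega)]
              have : i + 1 - n = (i - n) + 1 := by omega
              rw [this]
              exact hstep_e (i - n)
      have hMax2 : MaximalTraj P π τ2 := Or.inl rfl
      have hFair2 : FairPlus P ({(NonDetActs P, (∅ : Set A))} : Set (Set A × Set A)) π τ2 := by
        intro w hw _ a hπa v hv
        have hVσ : {i | σ i = w}.Infinite := hw.2
        have h1 : ({i | σ i = w} \ {i | i < n}).Infinite := hVσ.diff (Set.finite_lt_nat n)
        have hV : {j | (extTraj nxt s j).1 = w}.Infinite := by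
          apply Set.infinite_of_injOn_mapsTo (f := fun i => i - n)
            (s := {i | σ i = w} \ {i | i < n}) ?_ ?_ h1
          · intro i1 hi1 i2 hi2 h
            simp only [Set.mem_diff, Set.mem_setOf_eq, not_lt] at hi1 hi2
            have h' : i1 - n = i2 - n := h
            omega
          · intro i hi
            simp only [Set.mem_diff, Set.mem_setOf_eq, not_lt] at hi
            show (extTraj nxt s (i - n)).1 = w
            rw [← hσge i hi.2]
            exact hi.1
        obtain ⟨j0, hj0⟩ := hV.nonempty
        have hrw : ReachesFrom P π s w := hj0 ▸ hreach_e j0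
        have hK : {k | nxt w k = v}.Infinite := (hnxt w (hcase w hrw)).2 a hπa v hv
        have hJ := extTraj_infinite_pairs hV hK
        apply Set.infinite_of_injOn_mapsTo (f := fun j => j + n)
          (s := {j | (extTraj nxt s j).1 = w ∧ (extTraj nxt s (j+1)).1 = v}) ?_ ?_ hJ
        · intro a _ b _ h
          exact Nat.add_right_cancel h
        · intro j hj
          refine ⟨?_, ?_⟩
          · show σ (j + n) = w
            rw [hσn j]
            exact hj.1
          · show σ (j + n + 1) = v
            have : j + n + 1 = (j + 1) + n := by omega
            rw [this, hσn (j+1)]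
            exact hj.2
      obtain ⟨i, -, hgi⟩ := hSP τ2 hT2 hMax2 hFair2
      rcases Nat.lt_or_ge i n with h2 | h2
      · exact hpre i h2 ((hσlt i h2) ▸ hgi)
      · refine hnotgoal _ (hreach_e (i - n)) ?_
        rw [← hσge i h2]
        exact hgi
    · -- Case A: the policy dead-ends somewhere reachable from s
      push_neg at hcase
      obtain ⟨u, hru, hu⟩ := hcase
      obtain ⟨m, t, h0, hendt, hstepp⟩ := aux_rtg_path hru
      have hreach_t : ∀ j, ReachesFrom P π s (t j) := by
        intro j
        induction j with
        | zero => rw [h0]; exact Relation.ReflTransGen.refl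
        | succ j ih =>
          rcases Nat.lt_or_ge j m with hj | hj
          · exact ih.tail (hstepp j hj)
          · rw [hendt (j+1) (by omega)]
            rw [hendt j hj] at ih
            exact ih
      set σ : ℕ → S := fun i => if i < n then τ0.states i else t (i - n) with hσ
      have hσlt : ∀ i < n, σ i = τ0.states i := by
        intro i hi; rw [hσ]; dsimp only; rw [if_pos hi]
      have hσge : ∀ i, n ≤ i → σ i = t (i - n) := by
        intro i hi; rw [hσ]; dsimp only; rw [if_neg (by omega)]
      have hσns : σ n = s := by
        rw [hσge n (le_refl _)]
        simpa using h0
      set τ1 : Traj S := ⟨σ, some (n + m)⟩ with hτ1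
      have hT1 : IsTraj P π τ1 := by
        constructor
        · show σ 0 = P.init
          rcases Nat.eq_zero_or_pos n with hn0 | hn0
          · rw [hn0] at hend0
            rw [show (0:ℕ) = n from hn0.symm, hσns, ← hend0]
            exact hT0.1
          · rw [hσlt 0 hn0]
            exact hT0.1
        · intro i hi
          have hinm : i < n + m := hi (n + m) rfl
          show ∃ a, π (σ i) = some a ∧ σ (i+1) ∈ P.F a (σ i)
          rcases Nat.lt_or_ge (i+1) n with h1 | h1
          · rw [hσlt i (by omega), hσlt (i+1) h1]
            exact hT0.2 i (fun m' hm => by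
              rw [hlen0] at hm
              have := Option.some.inj hm
              omega)
          · rcases Nat.lt_or_ge i n with h2 | h2
            · have hin : i + 1 = n := by omega
              have hstp := hT0.2 i (fun m' hm => by
                rw [hlen0] at hm
                have := Option.some.inj hm
                omega)
              rw [hσlt i h2, hin, hσns, ← hend0]
              rw [hin] at hstp
              exact hstp
            · rw [hσge i h2, hσge (i+1) (by omega)]
              have h3 : i + 1 - n = (i - n) + 1 := by omega
              rw [h3]
              exact hstepp (i - n) (by omega)
      have hσend : σ (n + m) = u := by
        rw [hσge (n + m) (by omega)]
        have : n + m - n = m := by omega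
        rw [this]
        exact hendt m (le_refl _)
      have hMax1 : MaximalTraj P π τ1 := by
        refine Or.inr ⟨n + m, rfl, Or.inr ?_⟩
        have hs' : τ1.states (n+m) = u := hσend
        rw [hs']
        cases hu2 : π u with
        | none => exact Or.inl rfl
        | some a =>
          refine Or.inr ⟨a, rfl, ?_⟩
          rw [FOND.Applicable, hu a hu2]
          exact Set.not_nonempty_empty
      have hFair1 : FairPlus P ({(NonDetActs P, (∅ : Set A))} : Set (Set A × Set A)) π τ1 := by
        intro w hw
        exact absurd hw.1 (by simp [hτ1])
      obtain ⟨i, hin, hgi⟩ := hSP τ1 hT1 hMax1 hFair1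
      have hinm : i ≤ n + m := hin (n + m) rfl
      rcases Nat.lt_or_ge i n with h2 | h2
      · exact hpre i h2 ((hσlt i h2) ▸ hgi)
      · refine hnotgoal _ (hreach_t (i - n)) ?_
        rw [← hσge i h2]
        exact hgi
end

section
/- For any FOND problem P, policy π, and decrement/increment labeling of the actions, the graph obtained by running the Sieve procedure on the policy graph G(P, π) until no further edge removals are possible is independent of the order in which edges are removed: any two maximal sequences of Sieve edge removals yield the same final graph (in particular, whether the final graph is acyclic does not depend on the removal order). -/
open FondPaper

/-- Removability is preserved when passing to a subgraph still containing the edge. -/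
theorem removable_mono {S A V : Type} (π : S → Option A) (decs incs : A → Set V)
    {G G' : Set (S × S)} (hsub : G' ⊆ G) {e : S × S} (he : e ∈ G')
    (hr : Removable π decs incs G e) : Removable π decs incs G' e := by
  obtain ⟨-, x, hx, hall⟩ := hr
  exact ⟨he, x, hx, fun w h1 h2 =>
    hall w (Relation.ReflTransGen.mono (p := fun x y => (x, y) ∈ G) (fun a b h => hsub h) _ _ h1)
      (Relation.ReflTransGen.mono (p := fun x y => (x, y) ∈ G) (fun a b h => hsub h) _ _ h2)⟩

/-- A final (maximal) graph below the initial graph of a sieve sequence is below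
every member of the sequence. -/
theorem final_subset {S A V : Type} (π : S → Option A) (decs incs : A → Set V)
    (n : ℕ) (Gs : ℕ → Set (S × S)) (F : Set (S × S))
    (hstep : ∀ i < n, SieveStep π decs incs (Gs i) (Gs (i + 1)))
    (hF0 : F ⊆ Gs 0)
    (hmax : ∀ G', ¬ SieveStep π decs incs F G') :
    ∀ i ≤ n, F ⊆ Gs i := by
  intro i
  induction i with
  | zero => intro _; exact hF0
  | succ i ih =>
    intro hle
    have hsub : F ⊆ Gs i := ih (le_of_lt (Nat.lt_of_succ_le hle))
    obtain ⟨e, hrem, heq⟩ := hstep i (Nat.lt_of_succ_le hle)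
    intro f hf
    rw [heq]
    refine ⟨hsub hf, fun hfe => ?_⟩
    have hf' : e ∈ F := by
      have : f = e := hfe
      exact this ▸ hf
    exact hmax (F \ {e}) ⟨e, removable_mono π decs incs hsub hf' hrem, rfl⟩

/-- Each member of a sieve sequence is below the initial graph. -/
theorem seq_subset {S A V : Type} (π : S → Option A) (decs incs : A → Set V)
    (n : ℕ) (Gs : ℕ → Set (S × S))
    (hstep : ∀ i < n, SieveStep π decs incs (Gs i) (Gs (i + 1))) :
    ∀ i ≤ n, Gs i ⊆ Gs 0 := by
  intro i
  induction i with
  | zero => intro _; exact subset_rfl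
  | succ i ih =>
    intro hle
    obtain ⟨e, _, heq⟩ := hstep i (Nat.lt_of_succ_le hle)
    rw [heq]
    exact (Set.diff_subset).trans (ih (le_of_lt (Nat.lt_of_succ_le hle)))

/-- the final graph of the Sieve procedure on the policy graph G(P, π)
is independent of the order of edge removals: any two maximal sequences of Sieve
edge removals starting from G(P, π) yield the same final graph. -/
theorem stmt5 (S A V : Type) [Finite S] [Finite A] [Finite V]
    (P : FOND S A) (hgoal : P.goal.Nonempty)
    (π : S → Option A) (hπ : IsPolicy P π) (decs incs : A → Set V)
    (n m : ℕ) (Gs Hs : ℕ → Set (S × S))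
    (hG0 : Gs 0 = PolicyEdges P π)
    (hGstep : ∀ i < n, SieveStep π decs incs (Gs i) (Gs (i + 1)))
    (hGmax : ∀ G', ¬ SieveStep π decs incs (Gs n) G')
    (hH0 : Hs 0 = PolicyEdges P π)
    (hHstep : ∀ i < m, SieveStep π decs incs (Hs i) (Hs (i + 1)))
    (hHmax : ∀ H', ¬ SieveStep π decs incs (Hs m) H') :
    Gs n = Hs m := by
  have hGsub : Gs n ⊆ Hs 0 := by
    rw [hH0, ← hG0]; exact seq_subset π decs incs n Gs hGstep n le_rfl
  have hHsub : Hs m ⊆ Gs 0 := by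
    rw [hG0, ← hH0]; exact seq_subset π decs incs m Hs hHstep m le_rfl
  exact Set.Subset.antisymm
    (final_subset π decs incs m Hs (Gs n) hHstep hGsub hGmax m le_rfl)
    (final_subset π decs incs n Gs (Hs m) hGstep hHsub hHmax n le_rfl)
end

section
/- For any FOND problem P, policy π, and decrement/increment labeling of the actions: the Sieve procedure accepts the policy graph G(P, π) (i.e., the graph obtained when no further edge removals are possible is acyclic) if and only if the policy π terminates, i.e., every state reachable by π is QNP-terminating. -/
open FondPaper

section SieveHelpers

open FondPaper

variable {S A V : Type}

lemma gpath_of_path {E : Set (S × S)} (t : ℕ → S) (a b : ℕ) (hab : a ≤ b)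
    (h : ∀ i, a ≤ i → i < b → (t i, t (i+1)) ∈ E) : GPath E (t a) (t b) := by
  induction b, hab using Nat.le_induction with
  | base => exact Relation.ReflTransGen.refl
  | succ b hab ih =>
    exact Relation.ReflTransGen.tail (ih fun i hi hib => h i hi (by omega)) (h b hab (by omega))

lemma path_of_gpath {E : Set (S × S)} {a b : S} (h : GPath E a b) :
    ∃ (t : ℕ → S) (k : ℕ), t 0 = a ∧ t k = b ∧ ∀ i < k, (t i, t (i+1)) ∈ E := by
  induction h with
  | refl => exact ⟨fun _ => a, 0, rfl, rfl, by omega⟩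
  | @tail c d hac hcd ih =>
    obtain ⟨t, k, h0, hk, he⟩ := ih
    refine ⟨fun i => if i ≤ k then t i else d, k + 1, ?_, ?_, ?_⟩
    · simp [h0]
    · simp
    · intro i hi
      by_cases hik : i < k
      · simp only [if_pos (by omega : i ≤ k), if_pos (by omega : i + 1 ≤ k)]
        exact he i hik
      · have hik2 : i = k := by omega
        rw [hik2]
        simp only [if_pos (le_refl k), if_neg (by omega : ¬ k + 1 ≤ k)]
        rw [hk]; exact hcd

lemma ecycle_rotate {E : Set (S × S)} {s : S} {t : ℕ → S} {k : ℕ}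
    (h : ECycleOn E s t k) {j : ℕ} (hj : j ≤ k) :
    ∃ t' : ℕ → S, ECycleOn E (t j) t' k := by
  obtain ⟨hk, h0, hkk, he⟩ := h
  refine ⟨fun i => if i + j ≤ k then t (i + j) else t (i + j - k), hk, ?_, ?_, ?_⟩
  · simp only [if_pos (by omega : 0 + j ≤ k)]
    congr 1 <;> omega
  · by_cases hj0 : j = 0
    · subst hj0
      simp only [if_pos (by omega : k + 0 ≤ k)]
      rw [show k + 0 = k from rfl, hkk, ← h0]
    · simp only [if_neg (by omega : ¬ k + j ≤ k)]
      congr 1 <;> omega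
  · intro i hi
    by_cases h1 : i + 1 + j ≤ k
    · simp only [if_pos (by omega : i + j ≤ k), if_pos h1]
      rw [show i + 1 + j = (i + j) + 1 from by omega]
      exact he (i + j) (by omega)
    · by_cases h2 : i + j = k
      · simp only [if_pos (by omega : i + j ≤ k), if_neg h1]
        rw [h2, show i + 1 + j - k = 1 from by omega, hkk, ← h0]
        exact he 0 hk
      · simp only [if_neg (by omega : ¬ i + j ≤ k), if_neg h1]
        rw [show i + 1 + j - k = (i + j - k) + 1 from by omega]
        exact he (i + j - k) (by omega)

lemma cycle_through {E : Set (S × S)} {s s' w : S} (he : (s, s') ∈ E)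
    (h1 : GPath E s' w) (h2 : GPath E w s) :
    ∃ (t : ℕ → S) (k : ℕ), ECycleOn E s t k ∧ ∃ i ≤ k, t i = w := by
  obtain ⟨t1, k1, h10, h1k, h1e⟩ := path_of_gpath h1
  obtain ⟨t2, k2, h20, h2k, h2e⟩ := path_of_gpath h2
  set t : ℕ → S := fun i => if i = 0 then s else if i ≤ 1 + k1 then t1 (i - 1) else t2 (i - (1 + k1)) with ht
  have htw : t (1 + k1) = w := by
    simp only [ht]
    rw [if_neg (by omega : ¬ 1 + k1 = 0), if_pos (le_refl (1 + k1))]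
    rw [show 1 + k1 - 1 = k1 from by omega]; exact h1k
  refine ⟨t, 1 + k1 + k2, ⟨by omega, ?_, ?_, ?_⟩, 1 + k1, by omega, htw⟩
  · simp [ht]
  · rcases Nat.eq_zero_or_pos k2 with hk2 | hk2
    · subst hk2
      show t (1 + k1) = s
      rw [htw, ← h20]; exact h2k
    · simp only [ht]
      rw [if_neg (by omega : ¬ 1 + k1 + k2 = 0), if_neg (by omega : ¬ 1 + k1 + k2 ≤ 1 + k1)]
      rw [show 1 + k1 + k2 - (1 + k1) = k2 from by omega]; exact h2k
  · intro i hik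
    by_cases hi0 : i = 0
    · subst hi0
      have e1 : t 0 = s := by simp [ht]
      have e2 : t 1 = s' := by
        simp only [ht]
        rw [if_neg one_ne_zero, if_pos (by omega : 1 ≤ 1 + k1)]
        exact h10
      rw [e1, e2]; exact he
    · by_cases hile : i + 1 ≤ 1 + k1
      · have e1 : t i = t1 (i - 1) := by
          simp only [ht]; rw [if_neg hi0, if_pos (by omega : i ≤ 1 + k1)]
        have e2 : t (i + 1) = t1 i := by
          simp only [ht]; rw [if_neg (by omega : ¬ i + 1 = 0), if_pos hile]
          congr 1 <;> omega
        rw [e1, e2]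
        have := h1e (i - 1) (by omega)
        rwa [show i - 1 + 1 = i from by omega] at this
      · by_cases hieq : i = 1 + k1
        · subst hieq
          have e2 : t (1 + k1 + 1) = t2 1 := by
            simp only [ht]
            rw [if_neg (by omega : ¬ 1 + k1 + 1 = 0), if_neg (by omega : ¬ 1 + k1 + 1 ≤ 1 + k1)]
            congr 1 <;> omega
          rw [htw, e2, ← h20]
          exact h2e 0 (by omega)
        · have e1 : t i = t2 (i - (1 + k1)) := by
            simp only [ht]; rw [if_neg hi0, if_neg (by omega : ¬ i ≤ 1 + k1)]
          have e2 : t (i + 1) = t2 (i - (1 + k1) + 1) := by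
            simp only [ht]
            rw [if_neg (by omega : ¬ i + 1 = 0), if_neg (by omega : ¬ i + 1 ≤ 1 + k1)]
            congr 1 <;> omega
          rw [e1, e2]
          exact h2e (i - (1 + k1)) (by omega)

end SieveHelpers


/-- Sieve accepts the policy graph G(P, π) (the graph obtained when no
further edge removal is possible is acyclic) iff every state reachable by π is
QNP-terminating. -/
theorem stmt6 (S A V : Type) [Finite S] [Finite A] [Finite V]
    (P : FOND S A) (hgoal : P.goal.Nonempty)
    (π : S → Option A) (hπ : IsPolicy P π) (decs incs : A → Set V)
    (n : ℕ) (Gs : ℕ → Set (S × S))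
    (h0 : Gs 0 = PolicyEdges P π)
    (hstep : ∀ i < n, SieveStep π decs incs (Gs i) (Gs (i + 1)))
    (hmax : ∀ G', ¬ SieveStep π decs incs (Gs n) G') :
    GAcyclic (Gs n) ↔ ∀ s, ReachesFrom P π P.init s → QNPTerm P π decs incs s := by
  have hsub : ∀ i ≤ n, Gs i ⊆ PolicyEdges P π := by
    intro i
    induction i with
    | zero => intro _; rw [h0]
    | succ i ih =>
      intro hin
      obtain ⟨e, _, hG'⟩ := hstep i (by omega)
      rw [hG']
      exact Set.diff_subset.trans (ih (by omega))
  have hreachcyc : ∀ (t : ℕ → S) (k : ℕ) (s0 : S), ECycleOn (PolicyEdges P π) s0 t k →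
      ∀ j ≤ k, ReachesFrom P π P.init (t j) := by
    rintro t k s0 ⟨hk, h0c, hkc, he⟩ j hj
    rcases Nat.lt_or_ge j k with h | h
    · exact (he j h).1
    · have hjk : j = k := by omega
      rw [hjk, hkc, ← h0c]
      exact (he 0 hk).1
  constructor
  · -- Sieve accepts ⇒ terminating
    intro hac s hs T hT
    by_contra hsT
    -- edges lying on some T-free cycle of the policy graph
    set Kset : Set (S × S) :=
      {e | ∃ s0 t k, ECycleOn (PolicyEdges P π) s0 t k ∧ (∀ j ≤ k, t j ∉ T) ∧
        ∃ i < k, e = (t i, t (i+1))} with hKset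
    have L1 : ∀ u, ReachesFrom P π P.init u → u ∉ T →
        ∃ t k, ECycleOn (PolicyEdges P π) u t k ∧ ∀ j ≤ k, t j ∉ T := by
      intro u hu huT
      by_contra hcon
      push_neg at hcon
      exact huT (hT u hu (Or.inr (Or.inl hcon)))
    have L1' : ∀ u x, ReachesFrom P π P.init u → u ∉ T →
        (∃ a, π u = some a ∧ x ∈ decs a) →
        ∃ t k, ECycleOn (PolicyEdges P π) u t k ∧ (∀ j ≤ k, t j ∉ T) ∧
          ∃ i ≤ k, ∃ a, π (t i) = some a ∧ x ∈ incs a := by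
      intro u x hu huT hdec
      by_contra hcon
      push_neg at hcon
      apply huT
      apply hT u hu
      refine Or.inr (Or.inr ⟨x, hdec, fun t k hc hinc => ?_⟩)
      by_contra h2
      push_neg at h2
      obtain ⟨i, hik, a, hπa, hxa⟩ := hinc
      exact hcon t k hc h2 i hik a hπa hxa
    have L2 : ∀ i ≤ n, Kset ⊆ Gs i := by
      intro i
      induction i with
      | zero =>
        intro _
        rw [h0]
        rintro e ⟨s0, t, k, ⟨hk, h0c, hkc, he⟩, hfree, i, hik, rfl⟩
        exact he i hik
      | succ i ih =>
        intro hin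
        have hKi := ih (by omega)
        obtain ⟨e, ⟨heG, x, ⟨a, hπa, hdec⟩, hno⟩, hG'⟩ := hstep i (by omega)
        rw [hG']
        intro f hf
        refine ⟨hKi hf, ?_⟩
        simp only [Set.mem_singleton_iff]
        rintro rfl
        obtain ⟨s0, tC, kC, ⟨hkC, hC0, hCk, hCe⟩, hCfree, i0, hi0, hfe⟩ := hf
        have hCGi : ∀ m, m < kC → (tC m, tC (m+1)) ∈ Gs i := fun m hm =>
          hKi ⟨s0, tC, kC, ⟨hkC, hC0, hCk, hCe⟩, hCfree, m, hm, rfl⟩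
        rw [hfe] at hπa hno
        simp only [] at hπa hno
        -- u := tC i0 is reachable, not in T, and decrements x
        have hureach : ReachesFrom P π P.init (tC i0) :=
          hreachcyc tC kC s0 ⟨hkC, hC0, hCk, hCe⟩ i0 (le_of_lt hi0)
        have huT : tC i0 ∉ T := hCfree i0 (le_of_lt hi0)
        obtain ⟨tZ, kZ, ⟨hkZ, hZ0, hZk, hZe⟩, hZfree, iw, hiw, a', hπa', hxa'⟩ :=
          L1' (tC i0) x hureach huT ⟨a, hπa, hdec⟩
        have hZGi : ∀ m, m < kZ → (tZ m, tZ (m+1)) ∈ Gs i := fun m hm =>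
          hKi ⟨tC i0, tZ, kZ, ⟨hkZ, hZ0, hZk, hZe⟩, hZfree, m, hm, rfl⟩
        -- path tC (i0+1) →* tC i0 in Gs i
        have hpvu : GPath (Gs i) (tC (i0+1)) (tC i0) := by
          have p1 : GPath (Gs i) (tC (i0+1)) (tC kC) :=
            gpath_of_path tC (i0+1) kC (by omega) (fun m _ hm2 => hCGi m hm2)
          have p2 : GPath (Gs i) (tC 0) (tC i0) :=
            gpath_of_path tC 0 i0 (by omega) (fun m _ hm2 => hCGi m (by omega))
          rw [hCk, ← hC0] at p1
          exact p1.trans p2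
        have puw : GPath (Gs i) (tC i0) (tZ iw) := by
          have p := gpath_of_path (E := Gs i) tZ 0 iw (by omega) (fun m _ hm2 => hZGi m (by omega))
          rwa [hZ0] at p
        have pwu : GPath (Gs i) (tZ iw) (tC i0) := by
          have p := gpath_of_path (E := Gs i) tZ iw kZ hiw (fun m _ hm2 => hZGi m hm2)
          rwa [hZk] at p
        exact hno (tZ iw) (hpvu.trans puw) pwu a' hπa' hxa'
    obtain ⟨tC, kC, ⟨hkC, hC0, hCk, hCe⟩, hCfree⟩ := L1 s hs hsT
    have hKn := L2 n le_rfl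
    have hCGn : ∀ m, m < kC → (tC m, tC (m+1)) ∈ Gs n := fun m hm =>
      hKn ⟨s, tC, kC, ⟨hkC, hC0, hCk, hCe⟩, hCfree, m, hm, rfl⟩
    have hedge : (tC 0, tC 1) ∈ Gs n := hCGn 0 hkC
    have hpath : GPath (Gs n) (tC 1) (tC 0) := by
      have p := gpath_of_path (E := Gs n) tC 1 kC hkC (fun m _ hm => hCGn m hm)
      rwa [hCk, ← hC0] at p
    exact hac _ _ hedge hpath
  · -- terminating ⇒ Sieve accepts
    intro hterm
    have hGnsub := hsub n le_rfl
    set Tstar : Set S := {w | ¬ ∃ t k, ECycleOn (Gs n) w t k} with hTstar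
    have hstates : ∀ (t : ℕ → S) (k : ℕ) (s0 : S), ECycleOn (Gs n) s0 t k →
        ∀ j ≤ k, t j ∉ Tstar := by
      intro t k s0 hc j hj hmem
      obtain ⟨t', hc'⟩ := ecycle_rotate hc hj
      exact hmem ⟨t', k, hc'⟩
    have hclosed : QNPClosed P π decs incs Tstar := by
      intro u hu hdisj
      by_contra huW
      simp only [hTstar, Set.mem_setOf_eq, not_not] at huW
      obtain ⟨tc, kc, hkc, hc0, hck, hce⟩ := huW
      have hcycG0 : ECycleOn (PolicyEdges P π) u tc kc :=
        ⟨hkc, hc0, hck, fun m hm => hGnsub (hce m hm)⟩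
      have hedge0 : (u, tc 1) ∈ Gs n := by
        have := hce 0 hkc; rwa [hc0] at this
      rcases hdisj with h1 | h2 | h3
      · exact h1 ⟨tc, kc, hcycG0⟩
      · obtain ⟨j, hj, hjT⟩ := h2 tc kc hcycG0
        exact hstates tc kc u ⟨hkc, hc0, hck, hce⟩ j hj hjT
      · obtain ⟨x, ⟨a, hπa, hdec⟩, hQ⟩ := h3
        apply hmax (Gs n \ {(u, tc 1)})
        refine ⟨(u, tc 1), ⟨hedge0, x, ⟨a, hπa, hdec⟩, ?_⟩, rfl⟩
        intro w hp1 hp2 a' hπw hxw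
        obtain ⟨t, k, hcyc2, iw, hiwk, hiw⟩ := cycle_through hedge0 hp1 hp2
        have hcyc2G0 : ECycleOn (PolicyEdges P π) u t k :=
          ⟨hcyc2.1, hcyc2.2.1, hcyc2.2.2.1, fun m hm => hGnsub (hcyc2.2.2.2 m hm)⟩
        obtain ⟨j, hj, hjT⟩ := hQ t k hcyc2G0 ⟨iw, hiwk, a', by rw [hiw]; exact hπw, hxw⟩
        exact hstates t k u hcyc2 j hj hjT
    intro s s' hss' hp
    obtain ⟨t, k, hcyc, -⟩ := cycle_through hss' Relation.ReflTransGen.refl hp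
    exact hterm s (hGnsub hss').1 Tstar hclosed ⟨t, k, hcyc⟩
end

section
/- For any FOND+ problem ⟨P, C⟩ and any policy π: π solves ⟨P, C⟩ if and only if every state reachable by π is terminating (per the inductive FOND+ termination definition). -/
open FondPaper
namespace Stmt7Aux

open FondPaper

variable {S A : Type} {P : FOND S A} {π : S → Option A} {C : Set (Set A × Set A)}

lemma hasStep_of_lt {τ : Traj S} {n i : ℕ} (hlen : τ.len = some n) (h : i < n) :
    τ.HasStep i := by
  intro m hm
  rw [hlen] at hm
  injection hm with h'
  omega

lemma reachedBy_states {τ : Traj S} (hτ : IsTraj P π τ) (i : ℕ) (hi : τ.Inside i) :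
    ReachedBy P π (τ.states i) := by
  refine ⟨⟨τ.states, some i⟩, ⟨hτ.1, ?_⟩, i, rfl, rfl⟩
  intro j hj
  have hji : j < i := hj i rfl
  exact hτ.2 j (fun m hm => lt_of_lt_of_le hji (hi m hm))

lemma reachedBy_pstep {s s' : S} (h : ReachedBy P π s) (hst : PStep P π s s') :
    ReachedBy P π s' := by
  obtain ⟨τ, ⟨h0, hstep⟩, n, hlen, hend⟩ := h
  refine ⟨⟨fun i => if i ≤ n then τ.states i else s', some (n+1)⟩, ⟨?_, ?_⟩, n+1, rfl, ?_⟩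
  · simpa using h0
  · intro i hi
    have hin : i < n + 1 := hi (n+1) rfl
    by_cases hlt : i < n
    · have := hstep i (fun m hm => by rw [hlen] at hm; injection hm with h'; omega)
      simpa [show i ≤ n by omega, show i + 1 ≤ n by omega] using this
    · have hieq : i = n := by omega
      subst hieq
      simpa [le_refl, show ¬ (i+1 ≤ i) by omega, hend, PStep] using hst
  · simp

lemma reachedBy_reachesFrom {s s' : S} (h : ReachedBy P π s) (hr : ReachesFrom P π s s') :
    ReachedBy P π s' := by
  induction hr with
  | refl => exact h
  | tail _ hstep ih => exact reachedBy_pstep ih hstep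

lemma terminating_of_goal {s : S} (hs : s ∈ P.goal) : Terminating P C π s :=
  fun _ hT => hT.1 hs

lemma not_goal_of_not_terminating {s : S} (hs : ¬ Terminating P C π s) : s ∉ P.goal :=
  fun hg => hs (terminating_of_goal hg)

lemma fairFor_mono {T T' : Set S} (h : T ⊆ T') {s : S} (hf : FairFor P C π T s) :
    FairFor P C π T' s := by
  obtain ⟨c, hcC, ha, hcyc⟩ := hf
  exact ⟨c, hcC, ha, fun t k hck hb => (hcyc t k hck hb).imp fun j hj => ⟨hj.1, h hj.2⟩⟩

lemma phi_mono {T T' : Set S} (h : T ⊆ T') : Phi P C π T ⊆ Phi P C π T' := by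
  intro s hs
  simp only [Phi, Set.mem_union, Set.mem_setOf_eq] at hs ⊢
  rcases hs with (hs | ⟨a, ha, hff, s', hs', hT⟩) | ⟨a, ha, hne, hsub⟩
  · exact Or.inl (Or.inl hs)
  · exact Or.inl (Or.inr ⟨a, ha, fairFor_mono h hff, s', hs', h hT⟩)
  · exact Or.inr ⟨a, ha, hne, hsub.trans h⟩

lemma termClosed_iff {T : Set S} : TermClosed P C π T ↔ Phi P C π T ⊆ T := by
  constructor
  · rintro ⟨h1, h2, h3⟩ s hs
    simp only [Phi, Set.mem_union, Set.mem_setOf_eq] at hs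
    rcases hs with (hs | ⟨a, ha, hff, s', hs', hT⟩) | ⟨a, ha, hne, hsub⟩
    · exact h1 hs
    · exact h2 s a ha hff ⟨s', hs', hT⟩
    · by_cases hff : FairFor P C π T s
      · obtain ⟨s', hs'⟩ := hne
        exact h2 s a ha hff ⟨s', hs', hsub hs'⟩
      · exact h3 s a ha hff hne hsub
  · intro h
    refine ⟨fun s hs => h (Or.inl (Or.inl hs)), ?_, ?_⟩
    · rintro s a ha hff ⟨s', hs', hT⟩
      exact h (Or.inl (Or.inr ⟨a, ha, hff, s', hs', hT⟩))
    · intro s a ha _ hne hsub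
      exact h (Or.inr ⟨a, ha, hne, hsub⟩)

lemma tn_mono (n : ℕ) : (Phi P C π)^[n] ∅ ⊆ (Phi P C π)^[n+1] ∅ := by
  induction n with
  | zero => simp
  | succ n ih =>
    rw [Function.iterate_succ_apply', Function.iterate_succ_apply']
    exact phi_mono ih

lemma tn_subset_closed {T : Set S} (hT : TermClosed P C π T) (n : ℕ) :
    (Phi P C π)^[n] ∅ ⊆ T := by
  induction n with
  | zero => simp
  | succ n ih =>
    rw [Function.iterate_succ_apply']
    exact (phi_mono ih).trans (termClosed_iff.mp hT)

lemma exists_stab [Finite S] :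
    ∃ N : ℕ, (Phi P C π)^[N+1] (∅ : Set S) = (Phi P C π)^[N] ∅ := by
  by_contra hcon
  push_neg at hcon
  have hgrow : ∀ n : ℕ, n ≤ ((Phi P C π)^[n] (∅ : Set S)).ncard := by
    intro n
    induction n with
    | zero => simp
    | succ n ih =>
      have hss : (Phi P C π)^[n] (∅ : Set S) ⊂ (Phi P C π)^[n+1] ∅ :=
        ⟨tn_mono n, fun hsub => hcon n (le_antisymm hsub (tn_mono n))⟩
      have := Set.ncard_lt_ncard hss (Set.toFinite _)
      omega
  have hb := hgrow (Nat.card S + 1)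
  have hle : ((Phi P C π)^[Nat.card S + 1] (∅ : Set S)).ncard ≤ Nat.card S := by
    have := Set.ncard_le_ncard (Set.subset_univ ((Phi P C π)^[Nat.card S + 1] (∅ : Set S)))
      (Set.toFinite _)
    simpa [Set.ncard_univ] using this
  omega

lemma tstar_eq [Finite S] :
    ∃ N : ℕ, {s : S | Terminating P C π s} = (Phi P C π)^[N] ∅ := by
  obtain ⟨N, hN⟩ := exists_stab (P := P) (C := C) (π := π)
  have hclosed : TermClosed P C π ((Phi P C π)^[N] ∅) := by
    rw [termClosed_iff]
    rw [Function.iterate_succ_apply'] at hN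
    exact hN.le
  refine ⟨N, Set.Subset.antisymm ?_ ?_⟩
  · intro s hs
    exact hs _ hclosed
  · intro s hs T hT
    exact tn_subset_closed hT N hs

lemma terminating_iff [Finite S] {s : S} :
    Terminating P C π s ↔ ∃ n, s ∈ (Phi P C π)^[n] (∅ : Set S) := by
  obtain ⟨N, hN⟩ := tstar_eq (P := P) (C := C) (π := π)
  constructor
  · intro h
    refine ⟨N, ?_⟩
    rw [← hN]
    exact h
  · rintro ⟨n, hn⟩ T hT
    exact tn_subset_closed hT n hn

lemma termClosed_tstar [Finite S] : TermClosed P C π {s : S | Terminating P C π s} := by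
  obtain ⟨N, hN⟩ := tstar_eq (P := P) (C := C) (π := π)
  rw [hN]
  obtain ⟨N', hN'⟩ := exists_stab (P := P) (C := C) (π := π)
  rw [termClosed_iff]
  intro s hs
  -- need Phi (Tn N) ⊆ Tn N; Tn N = TStar is closed under everything since it contains all Tn's
  have h1 : Phi P C π ((Phi P C π)^[N] ∅) = (Phi P C π)^[N+1] (∅ : Set S) := by
    rw [Function.iterate_succ_apply']
  rw [h1] at hs
  rw [← hN]
  exact fun T hT => tn_subset_closed hT (N+1) hs

lemma pol_app_of_terminating [Finite S] {s : S} (ht : Terminating P C π s)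
    (hg : s ∉ P.goal) : ∃ a, π s = some a ∧ (P.F a s).Nonempty := by
  obtain ⟨nk, hnk⟩ := terminating_iff.mp ht
  cases nk with
  | zero => simp at hnk
  | succ k =>
    rw [Function.iterate_succ_apply'] at hnk
    simp only [Phi, Set.mem_union, Set.mem_setOf_eq] at hnk
    rcases hnk with (hg' | ⟨a, ha, _, s', hs', _⟩) | ⟨a, ha, hne, _⟩
    · exact absurd hg' hg
    · exact ⟨a, ha, s', hs'⟩
    · exact ⟨a, ha, hne⟩

lemma exists_min_rank [Finite S] {Rec : Set S} (hne : Rec.Nonempty)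
    (hterm : ∀ s ∈ Rec, Terminating P C π s) :
    ∃ s ∈ Rec, ∃ k, s ∈ Phi P C π ((Phi P C π)^[k] ∅) ∧
      ∀ s' ∈ Rec, s' ∉ (Phi P C π)^[k] (∅ : Set S) := by
  classical
  have hQ : ∃ n : ℕ, ∃ s ∈ Rec, s ∈ (Phi P C π)^[n] (∅ : Set S) := by
    obtain ⟨s, hs⟩ := hne
    obtain ⟨n, hn⟩ := terminating_iff.mp (hterm s hs)
    exact ⟨n, s, hs, hn⟩
  obtain ⟨s, hsRec, hsTn⟩ := Nat.find_spec hQ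
  set n0 := Nat.find hQ with hn0
  have hn0pos : n0 ≠ 0 := by
    intro h
    rw [h] at hsTn
    simp at hsTn
  obtain ⟨k, hk⟩ : ∃ k, n0 = k + 1 := ⟨n0 - 1, by omega⟩
  refine ⟨s, hsRec, k, ?_, ?_⟩
  · have : s ∈ (Phi P C π)^[k+1] (∅ : Set S) := hk ▸ hsTn
    rwa [Function.iterate_succ_apply'] at this
  · intro s' hs' hs'Tn
    have : n0 ≤ k := Nat.find_le ⟨s', hs', hs'Tn⟩
    omega

end Stmt7Aux

namespace Stmt7Aux
open FondPaper
variable {S A : Type} {P : FOND S A} {π : S → Option A} {C : Set (Set A × Set A)}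

lemma solves_of_terminating [Finite S] (hπ : IsPolicy P π)
    (h : ∀ s, ReachedBy P π s → Terminating P C π s) : SolvesPlus P C π := by
  intro τ hτ hmax hfair
  by_contra hng
  have hnotgoal : ∀ i, τ.Inside i → τ.states i ∉ P.goal := fun i hi hg => hng ⟨i, hi, hg⟩
  rcases hmax with hinf | ⟨n, hlen, hend⟩
  · -- infinite case
    have hstep : ∀ i, ∃ a, π (τ.states i) = some a ∧ τ.states (i+1) ∈ P.F a (τ.states i) :=
      fun i => hτ.2 i (fun m hm => by rw [hinf] at hm; cases hm)
    have hInside : ∀ i, τ.Inside i := fun i m hm => by rw [hinf] at hm; cases hm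
    have hng' : ∀ i, τ.states i ∉ P.goal := fun i => hnotgoal i (hInside i)
    have hterm : ∀ i, Terminating P C π (τ.states i) :=
      fun i => h _ (reachedBy_states hτ i (hInside i))
    set Rec : Set S := {s | {i | τ.states i = s}.Infinite} with hRec
    have hRecNe : Rec.Nonempty := by
      by_contra hcon
      rw [Set.not_nonempty_iff_eq_empty] at hcon
      have hUniv : (Set.univ : Set ℕ) ⊆ ⋃ s ∈ (Set.univ : Set S), {i | τ.states i = s} := by
        intro i _
        exact Set.mem_biUnion (Set.mem_univ _) rfl
      have hfin : (⋃ s ∈ (Set.univ : Set S), {i | τ.states i = s}).Finite := by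
        refine Set.Finite.biUnion Set.finite_univ (fun s _ => ?_)
        have : s ∉ Rec := by rw [hcon]; exact Set.notMem_empty s
        exact Set.not_infinite.mp this
      exact Set.infinite_univ (hfin.subset hUniv)
    obtain ⟨N, hN⟩ : ∃ N, ∀ i, N < i → τ.states i ∈ Rec := by
      have hBfin : (⋃ s ∈ {s : S | s ∉ Rec}, {i | τ.states i = s}).Finite := by
        refine Set.Finite.biUnion (Set.toFinite _) (fun s hs => ?_)
        exact Set.not_infinite.mp hs
      obtain ⟨N, hN⟩ := hBfin.bddAbove
      refine ⟨N, fun i hi => ?_⟩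
      by_contra hcon
      have : i ∈ ⋃ s ∈ {s : S | s ∉ Rec}, {i | τ.states i = s} :=
        Set.mem_biUnion hcon rfl
      exact absurd (hN this) (by omega)
    obtain ⟨s, hsRec, k, hsPhi, hmin⟩ := exists_min_rank hRecNe (fun s hs => by
      obtain ⟨i, hi⟩ := hs.nonempty
      exact hi ▸ hterm i)
    have hkill : ∀ j, N < j → τ.states j ∉ (Phi P C π)^[k] (∅ : Set S) :=
      fun j hj => hmin _ (hN j hj)
    have hsng : s ∉ P.goal := by
      obtain ⟨i, hi⟩ := hsRec.nonempty
      exact hi ▸ hng' i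
    simp only [Phi, Set.mem_union, Set.mem_setOf_eq] at hsPhi
    rcases hsPhi with (hg | ⟨a, ha, hff, s', hs'F, hs'T⟩) | ⟨a, ha, hne, hsub⟩
    · exact hsng hg
    · by_cases hFO : FairOcc C π τ s
      · have hpair := hfair s ⟨hinf, hsRec⟩ hFO a ha s' hs'F
        obtain ⟨i, hipair, hiN⟩ := hpair.exists_gt N
        exact hkill (i+1) (by omega) (hipair.2 ▸ hs'T)
      · obtain ⟨c, hcC, ⟨a1, ha1, ha1c⟩, hcyc⟩ := hff
        have ha1a : a1 = a := by rw [ha] at ha1; exact (Option.some.inj ha1).symm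
        subst ha1a
        have hbex : ∃ b ∈ c.2, {i | π (τ.states i) = some b}.Infinite := by
          by_contra hb
          push_neg at hb
          exact hFO ⟨c, hcC, ⟨a1, ha, ha1c⟩, fun b hbc => hb b hbc⟩
        obtain ⟨b, hbc, hbinf⟩ := hbex
        obtain ⟨i1, hi1s, hi1N⟩ := hsRec.exists_gt N
        obtain ⟨i2, hi2b, hi2⟩ := hbinf.exists_gt i1
        obtain ⟨i3, hi3s, hi3⟩ := hsRec.exists_gt i2
        have hi1s' : τ.states i1 = s := hi1s
        have hi3s' : τ.states i3 = s := hi3s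
        have hcy : CycleOn P π s (fun j => τ.states (i1 + j)) (i3 - i1) := by
          refine ⟨by omega, by simpa using hi1s', ?_, ?_⟩
          · simpa [show i1 + (i3 - i1) = i3 by omega] using hi3s'
          · intro j hj
            refine ⟨hng' _, ?_⟩
            obtain ⟨a', ha', hstep'⟩ := hstep (i1 + j)
            exact ⟨a', ha', by simpa [show i1 + (j+1) = (i1+j)+1 by omega] using hstep'⟩
        have hBocc : ∃ i ≤ i3 - i1, ∃ b', π (τ.states (i1 + i)) = some b' ∧ b' ∈ c.2 :=
          ⟨i2 - i1, by omega, b, by simpa [show i1 + (i2 - i1) = i2 by omega] using hi2b, hbc⟩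
        obtain ⟨j, hjle, hjT⟩ := hcyc _ (i3 - i1) hcy hBocc
        exact hkill (i1 + j) (by omega) hjT
    · obtain ⟨i, hi_s, hiN⟩ := hsRec.exists_gt N
      have hi_s' : τ.states i = s := hi_s
      obtain ⟨a', ha', hstep'⟩ := hstep i
      rw [hi_s'] at ha' hstep'
      have haa : a' = a := by rw [ha] at ha'; exact (Option.some.inj ha').symm
      subst haa
      exact hkill (i+1) (by omega) (hsub hstep')
  · -- finite case
    have hInn : τ.Inside n := fun m hm => by rw [hlen] at hm; injection hm with h'; omega
    have hng_n : τ.states n ∉ P.goal := hnotgoal n hInn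
    have hterm : Terminating P C π (τ.states n) := h _ ⟨τ, hτ, n, hlen, rfl⟩
    obtain ⟨a, ha, hne⟩ := pol_app_of_terminating hterm hng_n
    rcases hend with ⟨hg, _⟩ | hnone | ⟨a', ha', hna⟩
    · exact hng_n hg
    · rw [hnone] at ha; cases ha
    · have : a' = a := by rw [ha] at ha'; exact (Option.some.inj ha').symm
      subst this
      exact hna hne

end Stmt7Aux

namespace Stmt7Aux
open FondPaper

lemma exists_scc_max_aux {α : Type} [Finite α] (r : α → α → Prop) :
    ∀ (n : ℕ) (x0 : α), ({z | Relation.ReflTransGen r x0 z}).ncard ≤ n →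
    ∃ m, Relation.ReflTransGen r x0 m ∧
      ∀ y, Relation.ReflTransGen r m y → Relation.ReflTransGen r y m := by
  intro n
  induction n with
  | zero =>
    intro x0 h
    exfalso
    have : 0 < ({z | Relation.ReflTransGen r x0 z}).ncard :=
      (Set.ncard_pos (Set.toFinite _)).mpr ⟨x0, Relation.ReflTransGen.refl⟩
    omega
  | succ n ih =>
    intro x0 h
    by_cases hall : ∀ y, Relation.ReflTransGen r x0 y → Relation.ReflTransGen r y x0
    · exact ⟨x0, Relation.ReflTransGen.refl, hall⟩
    · push_neg at hall
      obtain ⟨y, hxy, hnyx⟩ := hall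
      have hss : {z | Relation.ReflTransGen r y z} ⊂ {z | Relation.ReflTransGen r x0 z} := by
        constructor
        · exact fun z hz => hxy.trans hz
        · intro hsub
          exact hnyx (hsub (show x0 ∈ {z | Relation.ReflTransGen r x0 z} from
            Relation.ReflTransGen.refl))
      have hlt := Set.ncard_lt_ncard hss (Set.toFinite _)
      obtain ⟨m, hym, hmax⟩ := ih y (by omega)
      exact ⟨m, hxy.trans hym, hmax⟩

lemma exists_scc_max {α : Type} [Finite α] (r : α → α → Prop) (x0 : α) :
    ∃ m, Relation.ReflTransGen r x0 m ∧
      ∀ y, Relation.ReflTransGen r m y → Relation.ReflTransGen r y m :=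
  exists_scc_max_aux r _ x0 le_rfl

lemma exists_enum {T : Type} [Finite T] [Nonempty T] :
    ∃ e : ℕ → T, ∀ t, {k | e k = t}.Infinite := by
  obtain ⟨n, ⟨f⟩⟩ := Finite.exists_equiv_fin T
  have hn : 0 < n := by
    rcases Nat.eq_zero_or_pos n with h | h
    · exact absurd (h ▸ f (Classical.arbitrary T)).isLt (by omega)
    · exact h
  refine ⟨fun k => f.symm ⟨k % n, Nat.mod_lt _ hn⟩, fun t => ?_⟩
  apply Set.infinite_of_injective_forall_mem (f := fun j : ℕ => (f t).val + j * n)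
  · intro a b hab
    simp only at hab
    have := (f t).isLt
    have : a * n = b * n := by omega
    exact Nat.eq_of_mul_eq_mul_right hn this
  · intro j
    have hmod : ((f t).val + j * n) % n = (f t).val := by
      rw [Nat.add_mul_mod_self_right]
      exact Nat.mod_eq_of_lt (f t).isLt
    show f.symm ⟨((f t).val + j * n) % n, _⟩ = t
    have : (⟨((f t).val + j * n) % n, Nat.mod_lt _ hn⟩ : Fin n) = f t := by
      ext; simp [hmod]
    rw [this, Equiv.symm_apply_apply]

variable {S : Type}

/-- glue two chains -/
lemma chain_glue {r : S → S → Prop} :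
    ∀ (l : List S) (l1 l' : List S) (u w : S), u :: l = l1 ++ [w] →
    List.Chain r u l → List.Chain r w l' → List.Chain r u (l ++ l') := by
  intro l
  induction l with
  | nil =>
    intro l1 l' u w heq hch hch'
    have : u = w := by
      cases l1 with
      | nil => simpa using heq
      | cons z zs =>
        exfalso
        simp only [List.cons_append, List.cons.injEq] at heq
        have := heq.2
        simp at this
    simpa [this] using hch'
  | cons y ys ih =>
    intro l1 l' u w heq hch hch'
    cases l1 with
    | nil => simp at heq
    | cons z zs =>
      simp only [List.cons_append, List.cons.injEq] at heq
      obtain ⟨rfl, heq2⟩ := heq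
      rw [List.Chain, List.chain_cons] at hch
      rw [List.cons_append, List.Chain, List.chain_cons]
      exact ⟨hch.1, ih zs l' y w heq2 hch.2 hch'⟩

lemma chain_of_fn {r : S → S → Prop} :
    ∀ (k : ℕ) (t : ℕ → S), (∀ i < k, r (t i) (t (i+1))) →
    List.Chain r (t 0) ((List.range k).map fun j => t (j+1)) := by
  intro k
  induction k with
  | zero => intro t _; simpa using List.Chain.nil
  | succ k ih =>
    intro t h
    rw [List.range_succ_eq_map]
    simp only [List.map_cons, List.map_map]
    rw [List.Chain, List.chain_cons]
    refine ⟨h 0 (by omega), ?_⟩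
    have := ih (fun i => t (i+1)) (fun i hi => h (i+1) (by omega))
    exact this

end Stmt7Aux

namespace Stmt7Aux

variable {S : Type}

def mstep (seg : ℕ → S → List S) : S × List S × ℕ → S × List S × ℕ
  | (s, [], c) => (s, [], c)
  | (_, [x], c) => (x, seg c x, c + 1)
  | (_, x :: y :: rest, c) => (x, y :: rest, c)

def mach (seg : ℕ → S → List S) (init : S × List S × ℕ) : ℕ → S × List S × ℕ
  | 0 => init
  | n+1 => mstep seg (mach seg init n)

section Machine

variable {r : S → S → Prop} {R : Set S} {seg : ℕ → S → List S} {init : S × List S × ℕ}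
variable (hseg : ∀ c u, u ∈ R → (seg c u ≠ [] ∧ List.Chain r u (seg c u) ∧ ∀ x ∈ seg c u, x ∈ R))
variable (hinit1 : init.1 ∈ R) (hinit2 : init.2.1 ≠ [])
variable (hinit3 : List.Chain r init.1 init.2.1) (hinit4 : ∀ x ∈ init.2.1, x ∈ R)

include hseg hinit1 hinit2 hinit3 hinit4 in
lemma mach_inv : ∀ n, (mach seg init n).1 ∈ R ∧ (mach seg init n).2.1 ≠ [] ∧
    List.Chain r (mach seg init n).1 (mach seg init n).2.1 ∧
    ∀ x ∈ (mach seg init n).2.1, x ∈ R := by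
  intro n
  induction n with
  | zero => exact ⟨hinit1, hinit2, hinit3, hinit4⟩
  | succ n ih =>
    obtain ⟨h1, h2, h3, h4⟩ := ih
    rcases hp : (mach seg init n) with ⟨s, l, c⟩
    rw [hp] at h1 h2 h3 h4
    simp only at h1 h2 h3 h4
    cases l with
    | nil => exact absurd rfl h2
    | cons x rest =>
      have hx : x ∈ R := h4 x (by simp)
      cases rest with
      | nil =>
        have hs := hseg c x hx
        simp only [mach, hp, mstep]
        exact ⟨hx, hs.1, hs.2.1, hs.2.2⟩
      | cons y rest' =>
        rw [List.Chain, List.chain_cons] at h3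
        simp only [mach, hp, mstep]
        exact ⟨hx, by simp, h3.2, fun z hz => h4 z (List.mem_cons_of_mem _ hz)⟩

include hseg hinit1 hinit2 hinit3 hinit4 in
lemma mach_step_rel : ∀ n, r (mach seg init n).1 (mach seg init (n+1)).1 := by
  intro n
  obtain ⟨h1, h2, h3, h4⟩ := mach_inv hseg hinit1 hinit2 hinit3 hinit4 n
  rcases hp : (mach seg init n) with ⟨s, l, c⟩
  rw [hp] at h1 h2 h3 h4
  simp only at h1 h2 h3 h4
  cases l with
  | nil => exact absurd rfl h2
  | cons x rest =>
    rw [List.Chain, List.chain_cons] at h3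
    cases rest with
    | nil => simpa only [mach, hp, mstep] using h3.1
    | cons y rest' => simpa only [mach, hp, mstep] using h3.1

lemma mach_cnt_succ (n : ℕ) : (mach seg init (n+1)).2.2 = (mach seg init n).2.2 ∨
    (mach seg init (n+1)).2.2 = (mach seg init n).2.2 + 1 := by
  rcases hp : (mach seg init n) with ⟨s, l, c⟩
  cases l with
  | nil => left; simp [mach, hp, mstep]
  | cons x rest =>
    cases rest with
    | nil => right; simp [mach, hp, mstep]
    | cons y rest' => left; simp [mach, hp, mstep]

lemma mach_cnt_mono : ∀ a b : ℕ, a ≤ b → (mach seg init a).2.2 ≤ (mach seg init b).2.2 := by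
  intro a b hab
  induction b with
  | zero => simp_all
  | succ b ih =>
    rcases Nat.lt_or_ge a (b+1) with h | h
    · have := ih (by omega)
      rcases mach_cnt_succ (seg := seg) (init := init) b with h' | h' <;> omega
    · have : a = b + 1 := by omega
      simp [this]

lemma mach_succ_single {n : ℕ} {s x : S} {c : ℕ} (h : mach seg init n = (s, [x], c)) :
    mach seg init (n+1) = (x, seg c x, c+1) := by
  simp [mach, h, mstep]

lemma mach_succ_cons {n : ℕ} {s x y : S} {rest : List S} {c : ℕ}
    (h : mach seg init n = (s, x :: y :: rest, c)) :
    mach seg init (n+1) = (x, y :: rest, c) := by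
  simp [mach, h, mstep]

include hseg hinit1 hinit2 hinit3 hinit4 in
lemma mach_first_inc : ∀ (L : ℕ) (n : ℕ), (mach seg init n).2.1.length ≤ L →
    ∃ n' ≥ n, (mach seg init n').2.2 = (mach seg init n).2.2 ∧
      ∃ x ∈ R, mach seg init (n'+1) =
        (x, seg ((mach seg init n).2.2) x, (mach seg init n).2.2 + 1) := by
  intro L
  induction L with
  | zero =>
    intro n hn
    obtain ⟨_, h2, _, _⟩ := mach_inv hseg hinit1 hinit2 hinit3 hinit4 n
    exfalso
    cases hp : (mach seg init n).2.1 with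
    | nil => exact h2 hp
    | cons x rest => rw [hp] at hn; simp at hn
  | succ L ih =>
    intro n hn
    obtain ⟨h1, h2, h3, h4⟩ := mach_inv hseg hinit1 hinit2 hinit3 hinit4 n
    rcases hp : (mach seg init n) with ⟨s, l, c⟩
    have hc : (mach seg init n).2.2 = c := by rw [hp]
    rw [hp] at h1 h2 h3 h4 hn
    simp only at h1 h2 h3 h4 hn
    cases l with
    | nil => exact absurd rfl h2
    | cons x rest =>
      have hx : x ∈ R := h4 x (by simp)
      cases rest with
      | nil =>
        exact ⟨n, le_rfl, by simpa using hc, x, hx, by rw [mach_succ_single hp]⟩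
      | cons y rest' =>
        have hnext : mach seg init (n+1) = (x, y :: rest', c) := mach_succ_cons hp
        have hlen : (mach seg init (n+1)).2.1.length ≤ L := by
          rw [hnext]
          simp at hn ⊢
          omega
        obtain ⟨n', hn', hcnt, x', hx', hm⟩ := ih (n+1) hlen
        have hc1 : (mach seg init (n+1)).2.2 = c := by rw [hnext]
        refine ⟨n', by omega, ?_, x', hx', ?_⟩
        · rw [hcnt, hc1]
        · rw [hm, hc1]

include hseg hinit1 hinit2 hinit3 hinit4 in
lemma mach_hits : ∀ d : ℕ, ∃ n, (mach seg init n).2.2 = init.2.2 + d := by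
  intro d
  induction d with
  | zero => exact ⟨0, by simp [mach]⟩
  | succ d ih =>
    obtain ⟨n, hn⟩ := ih
    obtain ⟨n', _, hcnt, x, _, hm⟩ :=
      mach_first_inc hseg hinit1 hinit2 hinit3 hinit4 (mach seg init n).2.1.length n le_rfl
    refine ⟨n'+1, ?_⟩
    rw [hm]
    simp [hn]
    omega

lemma mach_emit : ∀ (l : List S) (n : ℕ), (mach seg init n).2.1 = l →
    ∀ i (hi : i < l.length), (mach seg init (n+1+i)).1 = l[i] := by
  intro l
  induction l with
  | nil => intro n _ i hi; simp at hi
  | cons x rest ih =>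
    intro n hp i hi
    rcases hq : (mach seg init n) with ⟨s, l', c⟩
    rw [hq] at hp
    simp only at hp
    subst hp
    cases i with
    | zero =>
      cases rest with
      | nil => simp [mach, hq, mstep]
      | cons y rest' => simp [mach, hq, mstep]
    | succ j =>
      have hj : j < rest.length := by simpa using hi
      cases rest with
      | nil => simp at hj
      | cons y rest' =>
        have hnext : mach seg init (n+1) = (x, y :: rest', c) := by
          simp [mach, hq, mstep]
        have := ih (n+1) (by rw [hnext]) j hj
        have harith : n + 1 + (j + 1) = (n + 1) + 1 + j := by omega
        rw [harith]
        simpa using this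

end Machine
end Stmt7Aux

namespace Stmt7Aux
open FondPaper

lemma terminating_of_solves {S A : Type} [Finite S] [Finite A] {P : FOND S A}
    {π : S → Option A} {C : Set (Set A × Set A)}
    (hπ : IsPolicy P π) (hsol : SolvesPlus P C π) :
    ∀ s, ReachedBy P π s → Terminating P C π s := by
  classical
  by_contra hcon
  push_neg at hcon
  obtain ⟨sstar, hsreach, hsnt⟩ := hcon
  set TStar : Set S := {s | Terminating P C π s} with hTStarDef
  set U' : Set S := {u | ReachedBy P π u ∧ ¬ Terminating P C π u} with hU'Def
  have hU'ng : ∀ u ∈ U', u ∉ P.goal := fun u hu => not_goal_of_not_terminating hu.2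
  -- Step 1: policy defined and applicable on U'
  have hfin_traj : ∀ u ∈ U', ∃ a, π u = some a ∧ (P.F a u).Nonempty := by
    rintro u ⟨hur, hunt⟩
    by_contra hno
    obtain ⟨τ, hτ, n, hlen, hend⟩ := hur
    have hmax : MaximalTraj P π τ := by
      right
      refine ⟨n, hlen, ?_⟩
      cases hu : π u with
      | none => exact Or.inr (Or.inl (hend ▸ hu))
      | some a =>
        refine Or.inr (Or.inr ⟨a, hend ▸ hu, fun happ => hno ⟨a, hu, ?_⟩⟩)
        rw [FOND.Applicable, hend] at happ
        exact happ
    have hfairv : FairPlus P C π τ := by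
      intro s hrec
      exact absurd (hlen ▸ hrec.1) (by simp)
    obtain ⟨i, hiI, hig⟩ := hsol τ hτ hmax hfairv
    have hin : i ≤ n := hiI n hlen
    rcases lt_or_eq_of_le hin with hlt | heq
    · obtain ⟨a, ha, _⟩ := hτ.2 i (hasStep_of_lt hlen hlt)
      rw [hπ _ hig] at ha
      cases ha
    · subst heq
      exact hunt (hend ▸ terminating_of_goal hig)
  -- classification via closedness of TStar
  obtain ⟨hTSg, hTS2, hTS3⟩ := termClosed_tstar (P := P) (C := C) (π := π)
  have hstep2A : ∀ u ∈ U', ∀ a, π u = some a → ¬ FairFor P C π TStar u →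
      ∃ s' ∈ P.F a u, s' ∈ U' := by
    intro u hu a ha hnff
    obtain ⟨a', ha', hne⟩ := hfin_traj u hu
    have haa : a' = a := by rw [ha] at ha'; exact (Option.some.inj ha').symm
    subst haa
    by_contra hno
    push_neg at hno
    have hall : ∀ s' ∈ P.F a' u, s' ∈ TStar := by
      intro s' hs'
      by_contra hs'nt
      exact hno s' hs' ⟨reachedBy_pstep hu.1 ⟨a', ha', hs'⟩, hs'nt⟩
    exact hu.2 (hTS3 u a' ha' hnff hne hall)
  have hstep2B : ∀ u ∈ U', ∀ a, π u = some a → FairFor P C π TStar u →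
      ∀ s' ∈ P.F a u, s' ∈ U' := by
    intro u hu a ha hff s' hs'
    refine ⟨reachedBy_pstep hu.1 ⟨a, ha, hs'⟩, ?_⟩
    intro hterm
    exact hu.2 (hTS2 u a ha hff ⟨s', hs', hterm⟩)
  -- policy graph within U'
  set g : S → S → Prop := fun x y => x ∈ U' ∧ y ∈ U' ∧ PStep P π x y with hgDef
  have hgsucc : ∀ u ∈ U', ∃ v, g u v := by
    intro u hu
    obtain ⟨a, ha, hne⟩ := hfin_traj u hu
    by_cases hff : FairFor P C π TStar u
    · obtain ⟨s', hs'⟩ := hne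
      exact ⟨s', hu, hstep2B u hu a ha hff s' hs', a, ha, hs'⟩
    · obtain ⟨s', hs'F, hs'U⟩ := hstep2A u hu a ha hff
      exact ⟨s', hu, hs'U, a, ha, hs'F⟩
  obtain ⟨m, hsm, hmax⟩ := exists_scc_max g sstar
  set R : Set S := {y | Relation.ReflTransGen g m y} with hRDef
  have hmR : m ∈ R := Relation.ReflTransGen.refl
  have hRclosed : ∀ y ∈ R, ∀ v, g y v → v ∈ R := fun y hy v hgv => hy.tail hgv
  have hU'g : ∀ x y, Relation.ReflTransGen g x y → x ∈ U' → y ∈ U' := by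
    intro x y hxy
    induction hxy with
    | refl => exact id
    | tail _ hgv _ => exact fun _ => hgv.2.1
  have hsU' : sstar ∈ U' := ⟨hsreach, hsnt⟩
  have hmU' : m ∈ U' := hU'g _ _ hsm hsU'
  have hRU : R ⊆ U' := fun y hy => hU'g _ _ hy hmU'
  have hRconn : ∀ y ∈ R, ∀ v ∈ R, Relation.ReflTransGen g y v :=
    fun y hy v hv => (hmax y hy).trans hv
  have hchainR : ∀ (l : List S) (u : S), u ∈ R → List.Chain g u l → ∀ x ∈ l, x ∈ R := by
    intro l
    induction l with
    | nil => intro u _ _ x hx; simp at hx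
    | cons y ys ih =>
      intro u hu hch x hx
      rw [List.Chain, List.chain_cons] at hch
      rcases List.mem_cons.mp hx with rfl | hx'
      · exact hRclosed u hu _ hch.1
      · exact ih y (hRclosed u hu y hch.1) hch.2 x hx'
  have hnav : ∀ u ∈ R, ∀ w ∈ R, ∃ l : List S, List.Chain (PStep P π) u l ∧
      (∀ x ∈ l, x ∈ R) ∧ ∃ l1, u :: l = l1 ++ [w] := by
    intro u hu w hw
    obtain ⟨l, hch, hlast⟩ := List.exists_isChain_cons_of_relationReflTransGen (hRconn u hu w hw)
    refine ⟨l, hch.imp (fun a b h => h.2.2), hchainR l u hu hch, (u::l).dropLast, ?_⟩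
    rw [← hlast]
    exact (List.dropLast_append_getLast (by simp)).symm
  obtain ⟨nxt, hnxt⟩ : ∃ f : S → S, ∀ u ∈ R, g u (f u) := by
    refine ⟨fun u => if h : u ∈ U' then Classical.choose (hgsucc u h) else u, fun u hu => ?_⟩
    have hu' : u ∈ U' := hRU hu
    simp only [dif_pos hu']
    exact Classical.choose_spec (hgsucc u hu')
  -- segments for tasks
  have hsegex : ∀ (tk : S × (S ⊕ (Set A × Set A))) (u : S), ∃ l : List S,
      (u ∈ R → l ≠ [] ∧ List.Chain (PStep P π) u l ∧ ∀ x ∈ l, x ∈ R) ∧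
      (u ∈ R → ∀ w s', tk = (w, Sum.inl s') → w ∈ R → s' ∈ R →
        (∃ a, π w = some a ∧ s' ∈ P.F a w) → ∃ l1 l2, u :: l = l1 ++ w :: s' :: l2) ∧
      (u ∈ R → ∀ w c, tk = (w, Sum.inr c) → w ∈ R → c ∈ C → ¬ FairFor P C π TStar w →
        (∃ a, π w = some a ∧ a ∈ c.1) → ∃ x ∈ u :: l, ∃ b, π x = some b ∧ b ∈ c.2) := by
    rintro ⟨w, d⟩ u
    by_cases hu : u ∈ R
    case neg =>
      exact ⟨[u], fun h => absurd h hu, fun h => absurd h hu, fun h => absurd h hu⟩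
    have hfb : [nxt u] ≠ [] ∧ List.Chain (PStep P π) u [nxt u] ∧ ∀ x ∈ [nxt u], x ∈ R := by
      refine ⟨by simp, List.chain_cons.mpr ⟨(hnxt u hu).2.2, List.Chain.nil⟩, ?_⟩
      intro x hx
      simp only [List.mem_singleton] at hx
      subst hx
      exact hRclosed u hu _ (hnxt u hu)
    cases d with
    | inl s' =>
      by_cases hcond : w ∈ R ∧ s' ∈ R ∧ ∃ a, π w = some a ∧ s' ∈ P.F a w
      · obtain ⟨hwR, hs'R, a, ha, hs'F⟩ := hcond
        obtain ⟨lnav, hch, hlR, l1, hl1⟩ := hnav u hu w hwR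
        refine ⟨lnav ++ [s'], fun _ => ⟨by simp, ?_, ?_⟩,
          fun _ w0 s0 heq hw0 hs0 hex => ?_, fun _ w0 c0 heq => ?_⟩
        · exact chain_glue lnav l1 [s'] u w hl1 hch
            (List.chain_cons.mpr ⟨⟨a, ha, hs'F⟩, List.Chain.nil⟩)
        · intro x hx
          rcases List.mem_append.mp hx with h | h
          · exact hlR x h
          · simp only [List.mem_singleton] at h
            subst h
            exact hs'R
        · injection heq with h1 h2
          injection h2 with h3
          subst h1; subst h3
          refine ⟨l1, [], ?_⟩
          rw [← List.cons_append, hl1]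
          simp
        · exfalso
          injection heq with h1 h2
          cases h2
      · refine ⟨[nxt u], fun _ => hfb, fun _ w0 s0 heq hw0 hs0 hex => ?_, fun _ w0 c0 heq => ?_⟩
        · exfalso
          injection heq with h1 h2
          injection h2 with h3
          subst h1; subst h3
          exact hcond ⟨hw0, hs0, hex⟩
        · exfalso
          injection heq with h1 h2
          cases h2
    | inr c =>
      by_cases hcond : w ∈ R ∧ c ∈ C ∧ ¬ FairFor P C π TStar w ∧ ∃ a, π w = some a ∧ a ∈ c.1
      · obtain ⟨hwR, hcC, hnff, a, ha, hac⟩ := hcond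
        have hnff' := hnff
        rw [FairFor] at hnff'
        push_neg at hnff'
        obtain ⟨t, k, hcy, hB, havoid⟩ := hnff' c hcC ⟨a, ha, hac⟩
        obtain ⟨hk1, ht0, htk, hcst⟩ := hcy
        have hcycR : ∀ j, j ≤ k → t j ∈ R := by
          intro j
          induction j with
          | zero => intro _; rw [ht0]; exact hwR
          | succ j ih =>
            intro hj
            obtain ⟨hng0, a', ha', hF'⟩ := hcst j (by omega)
            have hjR : t j ∈ R := ih (by omega)
            have hjU : t j ∈ U' := hRU hjR
            have hnt : t (j+1) ∈ U' :=
              ⟨reachedBy_pstep hjU.1 ⟨a', ha', hF'⟩, havoid (j+1) hj⟩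
            exact hRclosed _ hjR _ ⟨hjU, hnt, a', ha', hF'⟩
        obtain ⟨lnav, hch, hlR, l1, hl1⟩ := hnav u hu w hwR
        have hchc : List.Chain (PStep P π) w ((List.range k).map fun j => t (j+1)) := by
          have := chain_of_fn (r := PStep P π) k t (fun i hi => (hcst i hi).2)
          rwa [ht0] at this
        refine ⟨lnav ++ (List.range k).map (fun j => t (j+1)), fun _ => ⟨?_, ?_, ?_⟩,
          fun _ w0 s0 heq => ?_, fun _ w0 c0 heq hw0 hc0C hnff0 hex0 => ?_⟩
        · intro hemp
          have := congrArg List.length hemp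
          simp at this
          omega
        · exact chain_glue lnav l1 _ u w hl1 hch hchc
        · intro x hx
          rcases List.mem_append.mp hx with h | h
          · exact hlR x h
          · obtain ⟨j, hj, rfl⟩ := List.mem_map.mp h
            exact hcycR (j+1) (by have := List.mem_range.mp hj; omega)
        · exfalso
          injection heq with h1 h2
          cases h2
        · injection heq with h1 h2
          injection h2 with h3
          subst h1; subst h3
          obtain ⟨i, hik, b, hbπ, hbc⟩ := hB
          refine ⟨t i, ?_, b, hbπ, hbc⟩
          cases i with
          | zero =>
            rw [ht0]
            have hwmem : w ∈ u :: lnav := by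
              rw [hl1]
              simp
            have heq2 : u :: (lnav ++ (List.range k).map fun j => t (j+1)) =
                (u :: lnav) ++ (List.range k).map (fun j => t (j+1)) := by simp
            rw [heq2]
            exact List.mem_append_left _ hwmem
          | succ j =>
            have hj : j < k := by omega
            have hmem : t (j+1) ∈ (List.range k).map (fun j => t (j+1)) :=
              List.mem_map.mpr ⟨j, List.mem_range.mpr hj, rfl⟩
            exact List.mem_cons_of_mem _ (List.mem_append_right _ hmem)
      · refine ⟨[nxt u], fun _ => hfb, fun _ w0 s0 heq => ?_,
          fun _ w0 c0 heq hw0 hc0C hnff0 hex0 => ?_⟩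
        · exfalso
          injection heq with h1 h2
          cases h2
        · exfalso
          injection heq with h1 h2
          injection h2 with h3
          subst h1; subst h3
          exact hcond ⟨hw0, hc0C, hnff0, hex0⟩
  choose segT hseg1 hseg2 hseg3 using hsegex
  have hne_task : Nonempty (S × (S ⊕ (Set A × Set A))) := ⟨(P.init, Sum.inl P.init)⟩
  obtain ⟨e, he⟩ := exists_enum (T := S × (S ⊕ (Set A × Set A)))
  set seg : ℕ → S → List S := fun c u => segT (e c) u with hsegdef
  set init : S × List S × ℕ := (m, seg 0 m, 1) with hinitdef
  have hseg' : ∀ c u, u ∈ R → (seg c u ≠ [] ∧ List.Chain (PStep P π) u (seg c u) ∧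
      ∀ x ∈ seg c u, x ∈ R) := fun c u hu => hseg1 (e c) u hu
  have hinit1 : init.1 ∈ R := hmR
  have hinit2 : init.2.1 ≠ [] := (hseg' 0 m hmR).1
  have hinit3 : List.Chain (PStep P π) init.1 init.2.1 := (hseg' 0 m hmR).2.1
  have hinit4 : ∀ x ∈ init.2.1, x ∈ R := (hseg' 0 m hmR).2.2
  set f : ℕ → S := fun n => (mach seg init n).1 with hfdef
  have hfR : ∀ n, f n ∈ R := fun n => (mach_inv hseg' hinit1 hinit2 hinit3 hinit4 n).1
  have hfstep : ∀ n, PStep P π (f n) (f (n+1)) :=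
    fun n => mach_step_rel hseg' hinit1 hinit2 hinit3 hinit4 n
  have hf0 : f 0 = m := rfl
  -- block property
  have hblock : ∀ (tk : S × (S ⊕ (Set A × Set A))) (n0 : ℕ), ∃ n, n0 < n ∧ ∃ u ∈ R,
      f n = u ∧ ∀ i (hi : i < (segT tk u).length), f (n + 1 + i) = (segT tk u)[i] := by
    intro tk n0
    obtain ⟨k, hek, hkgt⟩ := (he tk).exists_gt ((mach seg init n0).2.2)
    have hcnt0 : (mach seg init 0).2.2 = init.2.2 := rfl
    have hmono0 := mach_cnt_mono (seg := seg) (init := init) 0 n0 (by omega)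
    have hk1 : init.2.2 ≤ k := by omega
    obtain ⟨n, hn⟩ := mach_hits hseg' hinit1 hinit2 hinit3 hinit4 (k - init.2.2)
    have hcntn : (mach seg init n).2.2 = k := by omega
    have hn0n : n0 < n := by
      by_contra hle
      have := mach_cnt_mono (seg := seg) (init := init) n n0 (by omega)
      omega
    obtain ⟨n', hn'ge, hcnt', x, hxR, hm'⟩ :=
      mach_first_inc hseg' hinit1 hinit2 hinit3 hinit4 ((mach seg init n).2.1.length) n le_rfl
    rw [hcntn] at hm'
    have hek' : e k = tk := hek
    have hsegk : seg k x = segT tk x := by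
      show segT (e k) x = segT tk x
      rw [hek']
    rw [hsegk] at hm'
    refine ⟨n'+1, by omega, x, hxR, ?_, ?_⟩
    · show (mach seg init (n'+1)).1 = x
      rw [hm']
    · intro i hi
      have hpend : (mach seg init (n'+1)).2.1 = segT tk x := by rw [hm']
      exact mach_emit (segT tk x) (n'+1) hpend i hi
  -- prefix trajectory
  obtain ⟨σ, hσ, q, hσlen, hσend⟩ := hmU'.1
  set st : ℕ → S := fun i => if i ≤ q then σ.states i else f (i - q) with hstdef
  have htau : ∀ n, st (q + n) = f n := by
    intro n
    cases n with
    | zero => simpa [hstdef] using (hσend.trans hf0.symm)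
    | succ k =>
      have h1 : ¬ (q + (k+1) ≤ q) := by omega
      simp only [hstdef, if_neg h1]
      congr 1
      omega
  have hτtraj : IsTraj P π ⟨st, none⟩ := by
    constructor
    · show st 0 = P.init
      simp only [hstdef]
      rw [if_pos (by omega)]
      exact hσ.1
    · intro i _
      show ∃ a, π (st i) = some a ∧ st (i+1) ∈ P.F a (st i)
      rcases lt_trichotomy i q with hlt | heq | hgt
      · obtain ⟨a, ha, hF⟩ := hσ.2 i (hasStep_of_lt hσlen hlt)
        refine ⟨a, ?_, ?_⟩
        · simpa only [hstdef, if_pos (show i ≤ q by omega)] using ha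
        · simpa only [hstdef, if_pos (show i ≤ q by omega),
            if_pos (show i + 1 ≤ q by omega)] using hF
      · subst heq
        have h1 : st i = f 0 := by
          simpa using htau 0
        have h2 : st (i+1) = f 1 := by
          simpa using htau 1
        rw [h1, h2]
        exact hfstep 0
      · have h1 : st i = f (i - q) := by
          simp only [hstdef, if_neg (show ¬ i ≤ q by omega)]
        have h2 : st (i+1) = f ((i - q) + 1) := by
          simp only [hstdef, if_neg (show ¬ i + 1 ≤ q by omega)]
          congr 1
          omega
        rw [h1, h2]
        exact hfstep (i - q)
  have hτng : ∀ i, st i ∉ P.goal := by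
    intro i
    rcases lt_trichotomy i q with hlt | heq | hgt
    · obtain ⟨a, ha, _⟩ := hσ.2 i (hasStep_of_lt hσlen hlt)
      simp only [hstdef, if_pos (show i ≤ q by omega)]
      intro hgoal
      rw [hπ _ hgoal] at ha
      cases ha
    · subst heq
      have h1 : st i = m := by simpa [hf0] using htau 0
      rw [h1]
      exact hU'ng m hmU'
    · have h1 : st i = f (i - q) := by
        simp only [hstdef, if_neg (show ¬ i ≤ q by omega)]
      rw [h1]
      exact hU'ng _ (hRU (hfR (i - q)))
  have hfullemit : ∀ (tk : S × (S ⊕ (Set A × Set A))) (nb : ℕ), ∃ n, nb < n ∧ ∃ u ∈ R,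
      ∀ j (hj : j < (u :: segT tk u).length), st (q + n + j) = (u :: segT tk u)[j] := by
    intro tk nb
    obtain ⟨n, hn_gt, u, huR, hfn, hemit⟩ := hblock tk nb
    refine ⟨n, hn_gt, u, huR, ?_⟩
    intro j hj
    have h1 : q + n + j = q + (n + j) := by omega
    rw [h1, htau (n + j)]
    cases j with
    | zero => simpa using hfn
    | succ i =>
      have hi : i < (segT tk u).length := by simpa using hj
      have h3 := hemit i hi
      have h2 : n + (i+1) = n + 1 + i := by omega
      rw [h2, h3]
      simp
  have hτfair : FairPlus P C π ⟨st, none⟩ := by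
    intro s hrec hFO a ha s' hs'F
    have hinfrec : {i | st i = s}.Infinite := hrec.2
    obtain ⟨i0, hi0s, hi0q⟩ := hinfrec.exists_gt q
    have hi0s' : st i0 = s := hi0s
    have hsR : s ∈ R := by
      have h1 : st i0 = f (i0 - q) := by
        simp only [hstdef, if_neg (show ¬ i0 ≤ q by omega)]
      rw [← hi0s', h1]
      exact hfR (i0 - q)
    have hsU2 : s ∈ U' := hRU hsR
    by_cases hFF : FairFor P C π TStar s
    · -- all successors stay in U'; use the (s, inl s') task
      have hs'U : s' ∈ U' := hstep2B s hsU2 a ha hFF s' hs'F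
      have hs'R : s' ∈ R := hRclosed s hsR s' ⟨hsU2, hs'U, a, ha, hs'F⟩
      apply Set.infinite_of_forall_exists_gt
      intro nb
      obtain ⟨n, hn_gt, u, huR, hkey0⟩ := hfullemit (s, Sum.inl s') nb
      obtain ⟨l1, l2, hdecomp⟩ := hseg2 (s, Sum.inl s') u huR s s' rfl hsR hs'R ⟨a, ha, hs'F⟩
      have hkey : ∀ j (hj : j < (l1 ++ s :: s' :: l2).length),
          st (q + n + j) = (l1 ++ s :: s' :: l2)[j] := by
        rw [← hdecomp]
        exact hkey0
      have hp1 : l1.length < (l1 ++ s :: s' :: l2).length := by simp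
      have hp2 : l1.length + 1 < (l1 ++ s :: s' :: l2).length := by simp
      have hv1 : (l1 ++ s :: s' :: l2)[l1.length]'hp1 = s := by
        rw [List.getElem_append_right le_rfl]
        simp
      have hv2 : (l1 ++ s :: s' :: l2)[l1.length + 1]'hp2 = s' := by
        rw [List.getElem_append_right (by omega)]
        simp
      refine ⟨q + n + l1.length, ⟨?_, ?_⟩, by omega⟩
      · show st (q + n + l1.length) = s
        rw [hkey l1.length hp1, hv1]
      · show st (q + n + l1.length + 1) = s'
        have harith : q + n + l1.length + 1 = q + n + (l1.length + 1) := by omega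
        rw [harith, hkey (l1.length + 1) hp2, hv2]
    · exfalso
      obtain ⟨c, hcC, ⟨a0, ha0, ha0c⟩, hfin⟩ := hFO
      have hBadInf : {i | ∃ b, π (st i) = some b ∧ b ∈ c.2}.Infinite := by
        apply Set.infinite_of_forall_exists_gt
        intro nb
        obtain ⟨n, hn_gt, u, huR, hkey⟩ := hfullemit (s, Sum.inr c) nb
        obtain ⟨x, hxmem, b, hbπ, hbc⟩ :=
          hseg3 (s, Sum.inr c) u huR s c rfl hsR hcC hFF ⟨a0, ha0, ha0c⟩
        obtain ⟨p, hp, hxval⟩ := List.mem_iff_getElem.mp hxmem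
        refine ⟨q + n + p, ⟨b, ?_, hbc⟩, by omega⟩
        rw [hkey p hp, hxval]
        exact hbπ
      have hBadFin : {i | ∃ b, π (st i) = some b ∧ b ∈ c.2}.Finite := by
        have hsub : {i | ∃ b, π (st i) = some b ∧ b ∈ c.2} ⊆
            ⋃ b ∈ c.2, {i | π (st i) = some b} := by
          rintro i ⟨b, hb, hbc⟩
          exact Set.mem_biUnion hbc hb
        exact (Set.Finite.biUnion (Set.toFinite _) (fun b hb => hfin b hb)).subset hsub
      exact hBadInf hBadFin
  obtain ⟨i, _, hig⟩ := hsol ⟨st, none⟩ hτtraj (Or.inl rfl) hτfair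
  exact hτng i hig

end Stmt7Aux


/-- π solves the FOND+ problem ⟨P, C⟩ iff every state reachable by π
terminates per the inductive FOND+ termination definition. -/
theorem stmt7 (S A : Type) [Finite S] [Finite A] (P : FOND S A) (hgoal : P.goal.Nonempty)
    (π : S → Option A) (hπ : IsPolicy P π)
    (C : Set (Set A × Set A)) (hC : WellFormedC P C) :
    SolvesPlus P C π ↔ ∀ s, ReachedBy P π s → Terminating P C π s :=
  ⟨fun hsol => Stmt7Aux.terminating_of_solves hπ hsol,
   fun h => Stmt7Aux.solves_of_terminating hπ h⟩
end
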